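/- Every fighting fish F satisfies exactly one of the following, and in each case the data (F1, F2, i) are uniquely determined: (Case I) F = ENWS; (Case II) F = ✠_i(F1) for some fighting fish F1 and some 1 ≤ i ≤ jaw(F1); (Case III) F = ENWS ⊙ F2 for some fighting fish F2; (Case IV) F = ✠_i(F1) ⊙ F2 for some fighting fish F1, F2 and some 1 ≤ i ≤ jaw(F1). -/

import Mathlib

/-- The four-letter alphabet of steps. -/
inductive Letter : Type
  | E | N | W | S
deriving DecidableEq, Repr

open Letter

/-- Fighting fish: words obtainable from `ENWS` by upper, lower and double gluings. -/
inductive IsFF : List Letter → Prop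
  | base : IsFF [E, N, W, S]
  | upper (u v : List Letter) :
      IsFF (u ++ [W] ++ v) → IsFF (u ++ [N, W, S] ++ v)
  | lower (u v : List Letter) :
      IsFF (u ++ [N] ++ v) → IsFF (u ++ [E, N, W] ++ v)
  | double (u v : List Letter) :
      IsFF (u ++ [W, N] ++ v) → IsFF (u ++ [N, W] ++ v)

/-- Generalized fighting fish: words obtainable from the empty word by the
operations `∇_k` (replace `N^k` by `E N^k W`) and `△_k` (replace `W^k` by `N W^k S`),
for `k ≥ 0`. -/
inductive IsGFF : List Letter → Prop
  | base : IsGFF []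
  | nabla (u v : List Letter) (k : ℕ) :
      IsGFF (u ++ List.replicate k N ++ v) →
      IsGFF (u ++ [E] ++ List.replicate k N ++ [W] ++ v)
  | delta (u v : List Letter) (k : ℕ) :
      IsGFF (u ++ List.replicate k W ++ v) →
      IsGFF (u ++ [N] ++ List.replicate k W ++ [S] ++ v)

/-- The latitude of a word: number of `N`'s minus number of `S`'s. -/
def lat (w : List Letter) : ℤ := (w.count N : ℤ) - (w.count S : ℤ)

/-- The longitude of a word: number of `E`'s minus number of `W`'s. -/
def long (w : List Letter) : ℤ := (w.count E : ℤ) - (w.count W : ℤ)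

/-- The size of a word: half its length. -/
def size (w : List Letter) : ℕ := w.length / 2

/-- The jaw of a word: the length of the maximal initial run of `E`'s. -/
def jaw (w : List Letter) : ℕ := (w.takeWhile (· == Letter.E)).length

/-- The `i`-augmentation of a fighting fish `F = E^{jaw F} · G`:
`✠_i(F) = E^i · N · E^{jaw F − i} · G · S`. -/
def ffAug (w : List Letter) (i : ℕ) : List Letter :=
  List.replicate i Letter.E ++ [Letter.N] ++ List.replicate (jaw w - i) Letter.E ++
    w.drop (jaw w) ++ [Letter.S]

/-- The concatenation of fighting fish `F1 = E^{jaw F1} · N · R` and `F2 = G · S`: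
`F1 ⊙ F2 = E^{jaw F1} · G · R`. -/
def ffConc (w1 w2 : List Letter) : List Letter :=
  List.replicate (jaw w1) Letter.E ++ w2.dropLast ++ w1.drop (jaw w1 + 1)

/-- Case I of the decomposition: `F` is the head `ENWS`. -/
def CaseI (F : List Letter) : Prop := F = [Letter.E, Letter.N, Letter.W, Letter.S]

/-- Case II: `F = ✠_i(F1)` for a unique fighting fish `F1` and unique
`1 ≤ i ≤ jaw F1`. -/
def CaseII (F : List Letter) : Prop :=
  ∃! q : List Letter × ℕ,
    IsFF q.1 ∧ 1 ≤ q.2 ∧ q.2 ≤ jaw q.1 ∧ F = ffAug q.1 q.2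

/-- Case III: `F = ENWS ⊙ F2` for a unique fighting fish `F2`. -/
def CaseIII (F : List Letter) : Prop :=
  ∃! F2 : List Letter,
    IsFF F2 ∧ F = ffConc [Letter.E, Letter.N, Letter.W, Letter.S] F2

/-- Case IV: `F = ✠_i(F1) ⊙ F2` for unique fighting fish `F1`, `F2` and unique
`1 ≤ i ≤ jaw F1`. -/
def CaseIV (F : List Letter) : Prop :=
  ∃! q : (List Letter × List Letter) × ℕ,
    IsFF q.1.1 ∧ IsFF q.1.2 ∧ 1 ≤ q.2 ∧ q.2 ≤ jaw q.1.1 ∧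
      F = ffConc (ffAug q.1.1 q.2) q.1.2

/-! ### Basic list infrastructure -/

abbrev rep (n : ℕ) : List Letter := List.replicate n Letter.E

lemma rep_succ_cons (n : ℕ) : rep (n + 1) = E :: rep n := rfl

lemma rep_add (m n : ℕ) : rep (m + n) = rep m ++ rep n :=
  List.replicate_add m n E

lemma rep_merge (m n : ℕ) (X : List Letter) :
    rep m ++ (rep n ++ X) = rep (m + n) ++ X := by
  rw [rep_add, List.append_assoc]

lemma rep_succ_app (n : ℕ) : rep (n + 1) = rep n ++ [E] := List.replicate_succ'

lemma jaw_rep_N (j : ℕ) (T : List Letter) : jaw (rep j ++ N :: T) = j := by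
  induction j with
  | zero => rfl
  | succ j ih =>
    simp only [jaw, rep_succ_cons, List.cons_append, List.takeWhile_cons] at *
    simpa using ih

lemma drop_rep (j : ℕ) (T : List Letter) : (rep j ++ T).drop j = T :=
  List.drop_left' (by simp)

lemma drop_rep_N (j : ℕ) (T : List Letter) : (rep j ++ N :: T).drop (j + 1) = T := by
  have : rep j ++ N :: T = (rep j ++ [N]) ++ T := by simp
  rw [this]
  exact List.drop_left' (by simp)

lemma ffAug_eq (j : ℕ) (T : List Letter) (i : ℕ) :
    ffAug (rep j ++ N :: T) i = rep i ++ N :: (rep (j - i) ++ N :: (T ++ [S])) := by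
  have h1 : jaw (rep j ++ N :: T) = j := jaw_rep_N j T
  have h2 : (rep j ++ N :: T).drop j = N :: T := drop_rep j _
  simp [ffAug, h1, h2]

lemma ffConc_eq (j : ℕ) (T : List Letter) (X : List Letter) :
    ffConc (rep j ++ N :: T) X = rep j ++ X.dropLast ++ T := by
  have h1 : jaw (rep j ++ N :: T) = j := jaw_rep_N j T
  have h2 : (rep j ++ N :: T).drop (j + 1) = T := drop_rep_N j T
  simp [ffConc, h1, h2]

lemma rep_peel {j : ℕ} {T u v : List Letter} {x : Letter} (hx : x ≠ E)
    (h : rep j ++ N :: T = u ++ x :: v) :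
    (x = N ∧ u = rep j ∧ v = T) ∨ ∃ u₂, u = rep j ++ N :: u₂ ∧ T = u₂ ++ x :: v := by
  induction j generalizing u with
  | zero =>
    simp only [rep, List.replicate, List.nil_append] at h ⊢
    cases u with
    | nil => simp at h; exact Or.inl ⟨h.1.symm, rfl, h.2.symm⟩
    | cons a u' =>
      simp only [List.cons_append, List.cons.injEq] at h
      exact Or.inr ⟨u', by simp [h.1.symm], h.2⟩
  | succ j ih =>
    rw [rep_succ_cons, List.cons_append] at h
    cases u with
    | nil => simp only [List.nil_append, List.cons.injEq] at h; exact absurd h.1.symm hx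
    | cons a u' =>
      simp only [List.cons_append, List.cons.injEq] at h
      rcases ih h.2 with ⟨h1, h2, h3⟩ | ⟨u₂, h1, h2⟩
      · exact Or.inl ⟨h1, by simp [rep_succ_cons, h.1.symm, h2], h3⟩
      · exact Or.inr ⟨u₂, by simp [rep_succ_cons, h.1.symm, h1], h2⟩

lemma rep_N_eq {a b : ℕ} {x y : List Letter} (h : rep a ++ N :: x = rep b ++ N :: y) :
    a = b ∧ x = y := by
  induction a generalizing b with
  | zero =>
    cases b with
    | zero => simpa using h
    | succ b => rw [rep_succ_cons] at h; simp at h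
  | succ a ih =>
    cases b with
    | zero => rw [rep_succ_cons] at h; simp at h
    | succ b =>
      rw [rep_succ_cons, rep_succ_cons] at h
      simp only [List.cons_append, List.cons.injEq, true_and] at h
      obtain ⟨h1, h2⟩ := ih h
      exact ⟨by omega, h2⟩

lemma cons_split {xs ys u v : List Letter} {x : Letter} (h : xs ++ ys = u ++ x :: v) :
    (∃ t, xs = u ++ x :: t ∧ v = t ++ ys) ∨ (∃ t, u = xs ++ t ∧ ys = t ++ x :: v) := by
  rcases List.append_eq_append_iff.1 h with ⟨a', ha1, ha2⟩ | ⟨c', hc1, hc2⟩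
  · exact Or.inr ⟨a', ha1, ha2⟩
  · cases c' with
    | nil =>
      refine Or.inr ⟨[], by simpa using hc1.symm, ?_⟩
      simpa using hc2.symm
    | cons b c'' =>
      simp only [List.cons_append, List.cons.injEq] at hc2
      exact Or.inl ⟨c'', by rw [hc1, hc2.1], hc2.2⟩

lemma split_left {T R u v : List Letter} {x : Letter} (h : T ++ R = u ++ x :: v)
    (hx : x ∉ R) : ∃ t, T = u ++ x :: t ∧ v = t ++ R := by
  rcases cons_split h with ⟨t, h1, h2⟩ | ⟨t, h1, h2⟩
  · exact ⟨t, h1, h2⟩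
  · exact absurd (by rw [h2]; simp) hx

lemma split_left2 {T R u v : List Letter} (h : T ++ R = u ++ W :: N :: v)
    (hW : W ∉ R) (hN : N ∉ R) : ∃ t, T = u ++ W :: N :: t ∧ v = t ++ R := by
  obtain ⟨t, h1, h2⟩ := split_left h hW
  cases t with
  | nil =>
    simp only [List.nil_append] at h2
    exact absurd (by rw [← h2]; simp) hN
  | cons b t' =>
    simp only [List.cons_append, List.cons.injEq] at h2
    exact ⟨t', by rw [h1, h2.1], h2.2⟩

lemma rep_eq_append {n : ℕ} {a b : List Letter} (h : rep n = a ++ b) :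
    a = rep a.length ∧ b = rep b.length := by
  induction a generalizing n with
  | nil =>
    simp only [List.nil_append] at h
    subst h
    simp
  | cons x a' ih =>
    cases n with
    | zero => simp at h
    | succ n =>
      rw [rep_succ_cons] at h
      simp only [List.cons_append, List.cons.injEq] at h
      obtain ⟨h1, h2⟩ := ih h.2
      refine ⟨?_, h2⟩
      rw [List.length_cons, rep_succ_cons, ← h.1, ← h1]

lemma two_last {A B : List Letter} {x y : Letter} (h : A ++ [x, S] = B ++ [y, S]) :
    x = y := by
  have := congrArg List.reverse h
  simp only [List.reverse_append] at this
  simp at this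
  exact this.1

lemma lat_append (a b : List Letter) : lat (a ++ b) = lat a + lat b := by
  simp [lat, List.count_append]; ring

lemma lat_rep (n : ℕ) : lat (rep n) = 0 := by
  simp [lat, List.count_replicate]

lemma long_append (a b : List Letter) : long (a ++ b) = long a + long b := by
  simp [long, List.count_append]; ring

lemma long_rep (n : ℕ) : long (rep n) = n := by
  simp [long, List.count_replicate]

/-! ### Reverse-based helpers -/

lemma append1_inj {A B : List Letter} {x y : Letter} (h : A ++ [x] = B ++ [y]) :
    x = y := by
  have := congrArg List.reverse h
  simp at this
  exact this.1

lemma append2_inj {A B : List Letter} {x y x' y' : Letter}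
    (h : A ++ [x, y] = B ++ [x', y']) : x = x' ∧ y = y' := by
  have := congrArg List.reverse h
  simp at this
  exact ⟨this.2.1, this.1⟩

lemma exists_last1 {b : List Letter} (hb : b ≠ []) : ∃ b' x, b = b' ++ [x] := by
  rcases hr : b.reverse with _ | ⟨c, t⟩
  · simp at hr; exact absurd hr hb
  · exact ⟨t.reverse, c, by have := congrArg List.reverse hr; simpa using this⟩

lemma exists_last2 {b : List Letter} (hb : 2 ≤ b.length) : ∃ b' x y, b = b' ++ [x, y] := by
  rcases hr : b.reverse with _ | ⟨c1, t⟩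
  · have := congrArg List.length hr; rw [List.length_reverse] at this
    simp only [List.length_nil] at this; omega
  · rcases t with _ | ⟨c2, t'⟩
    · have := congrArg List.length hr; rw [List.length_reverse] at this
      simp only [List.length_cons, List.length_nil] at this; omega
    · refine ⟨t'.reverse, c2, c1, ?_⟩
      have := congrArg List.reverse hr; simpa using this

/-! ### Basic facts about fighting fish -/

lemma ff_last {F : List Letter} (hF : IsFF F) : ∃ D, F = D ++ [S] := by
  induction hF with
  | base => exact ⟨[E, N, W], rfl⟩
  | upper u v h ih =>
    rcases v with _ | ⟨c, v'⟩
    · exact ⟨u ++ [N, W], by simp⟩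
    · obtain ⟨D, hD⟩ := ih
      obtain ⟨v'', x, hv⟩ := exists_last1 (b := c :: v') (by simp)
      rw [hv] at hD
      have hx : x = S := append1_inj (by simpa [← List.append_assoc] using hD)
      exact ⟨u ++ [N, W, S] ++ v'', by rw [hv, hx]; simp⟩
  | lower u v h ih =>
    rcases v with _ | ⟨c, v'⟩
    · obtain ⟨D, hD⟩ := ih
      have : N = S := append1_inj (A := u) (B := D) (by simpa using hD)
      exact absurd this (by decide)
    · obtain ⟨D, hD⟩ := ih
      obtain ⟨v'', x, hv⟩ := exists_last1 (b := c :: v') (by simp)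
      rw [hv] at hD
      have hx : x = S := append1_inj (by simpa [← List.append_assoc] using hD)
      exact ⟨u ++ [E, N, W] ++ v'', by rw [hv, hx]; simp⟩
  | double u v h ih =>
    rcases v with _ | ⟨c, v'⟩
    · obtain ⟨D, hD⟩ := ih
      have hD' : (u ++ [W]) ++ [N] = D ++ [S] := by simpa using hD
      exact absurd (append1_inj hD') (by decide)
    · obtain ⟨D, hD⟩ := ih
      obtain ⟨v'', x, hv⟩ := exists_last1 (b := c :: v') (by simp)
      rw [hv] at hD
      have hx : x = S := append1_inj (by simpa [← List.append_assoc] using hD)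
      exact ⟨u ++ [N, W] ++ v'', by rw [hv, hx]; simp⟩

lemma ff_form {F : List Letter} (hF : IsFF F) : ∃ j T, 1 ≤ j ∧ F = rep j ++ N :: T := by
  induction hF with
  | base => exact ⟨1, [W, S], le_refl 1, rfl⟩
  | upper u v h ih =>
    obtain ⟨j, T, hj, hT⟩ := ih
    have h' : rep j ++ N :: T = u ++ W :: v := by simpa using hT.symm
    rcases rep_peel (by decide) h' with ⟨hWN, _, _⟩ | ⟨u₂, hu, hT2⟩
    · exact absurd hWN (by decide)
    · exact ⟨j, u₂ ++ [N, W, S] ++ v, hj, by rw [hu]; simp⟩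
  | lower u v h ih =>
    obtain ⟨j, T, hj, hT⟩ := ih
    have h' : rep j ++ N :: T = u ++ N :: v := by simpa using hT.symm
    rcases rep_peel (by decide) h' with ⟨_, hu, hv⟩ | ⟨u₂, hu, hT2⟩
    · refine ⟨j + 1, W :: T, by omega, ?_⟩
      rw [hu, hv, rep_succ_app]
      simp
    · exact ⟨j, u₂ ++ [E, N, W] ++ v, hj, by rw [hu]; simp⟩
  | double u v h ih =>
    obtain ⟨j, T, hj, hT⟩ := ih
    have h' : rep j ++ N :: T = u ++ W :: (N :: v) := by simpa using hT.symm
    rcases rep_peel (by decide) h' with ⟨hWN, _, _⟩ | ⟨u₂, hu, hT2⟩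
    · exact absurd hWN (by decide)
    · exact ⟨j, u₂ ++ [N, W] ++ v, hj, by rw [hu]; simp⟩

lemma ff_lat {F : List Letter} (hF : IsFF F) : lat F = 0 := by
  induction hF with
  | base => rfl
  | upper u v h ih => simp [lat, List.count_append, List.count_cons] at ih ⊢; omega
  | lower u v h ih => simp [lat, List.count_append, List.count_cons] at ih ⊢; omega
  | double u v h ih => simp [lat, List.count_append, List.count_cons] at ih ⊢; omega

lemma ff_long {F : List Letter} (hF : IsFF F) : long F = 0 := by
  induction hF with
  | base => rfl
  | upper u v h ih => simp [long, List.count_append, List.count_cons] at ih ⊢; omega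
  | lower u v h ih => simp [long, List.count_append, List.count_cons] at ih ⊢; omega
  | double u v h ih => simp [long, List.count_append, List.count_cons] at ih ⊢; omega

lemma ff_struct {F : List Letter} (hF : IsFF F) :
    ∃ j T, 1 ≤ j ∧ jaw F = j ∧ F = rep j ++ N :: (T ++ [S]) := by
  obtain ⟨j, T0, hj, hT0⟩ := ff_form hF
  obtain ⟨D, hD⟩ := ff_last hF
  rcases T0 with _ | ⟨c, T0'⟩
  · rw [hT0] at hD
    have : N = S := append1_inj (A := rep j) (B := D) (by simpa using hD)
    exact absurd this (by decide)
  · obtain ⟨T, x, hT⟩ := exists_last1 (b := c :: T0') (by simp)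
    rw [hT0, hT] at hD
    have hD' : (rep j ++ N :: T) ++ [x] = D ++ [S] := by simpa using hD
    have hx : x = S := append1_inj hD'
    refine ⟨j, T, hj, ?_, ?_⟩
    · rw [hT0]; exact jaw_rep_N _ _
    · rw [hT0, hT, hx]

lemma ff_penult {F : List Letter} (hF : IsFF F) :
    ∃ D, F = D ++ [W, S] ∨ F = D ++ [S, S] := by
  induction hF with
  | base => exact ⟨[E, N], Or.inl rfl⟩
  | upper u v h ih =>
    rcases v with _ | ⟨c, _ | ⟨c', v''⟩⟩
    · exact ⟨u ++ [N], Or.inl (by simp)⟩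
    · obtain ⟨D, hD⟩ := ih
      rcases hD with hD | hD
      · have := append2_inj (A := u) (by simpa using hD)
        refine ⟨u ++ [N, W], Or.inr ?_⟩
        rw [this.2]; simp
      · have := append2_inj (A := u) (by simpa using hD)
        exact absurd this.1 (by decide)
    · obtain ⟨D, hD⟩ := ih
      have hlen : 2 ≤ (c :: c' :: v'').length := by simp
      obtain ⟨v', x, y, hv⟩ := exists_last2 hlen
      rcases hD with hD | hD
      · rw [hv] at hD
        have hD' : (u ++ [W] ++ v') ++ [x, y] = D ++ [W, S] := by simpa using hD
        have := append2_inj hD'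
        exact ⟨u ++ [N, W, S] ++ v', Or.inl (by simp [hv, this.1, this.2])⟩
      · rw [hv] at hD
        have hD' : (u ++ [W] ++ v') ++ [x, y] = D ++ [S, S] := by simpa using hD
        have := append2_inj hD'
        exact ⟨u ++ [N, W, S] ++ v', Or.inr (by simp [hv, this.1, this.2])⟩
  | lower u v h ih =>
    rcases v with _ | ⟨c, _ | ⟨c', v''⟩⟩
    · obtain ⟨D, hD⟩ := ih
      rcases hD with hD | hD
      · have : N = S := append1_inj (A := u) (B := D ++ [W]) (by simpa using hD)
        exact absurd this (by decide)
      · have : N = S := append1_inj (A := u) (B := D ++ [S]) (by simpa using hD)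
        exact absurd this (by decide)
    · obtain ⟨D, hD⟩ := ih
      rcases hD with hD | hD
      · have := append2_inj (A := u) (by simpa using hD)
        exact absurd this.1 (by decide)
      · have := append2_inj (A := u) (by simpa using hD)
        exact absurd this.1 (by decide)
    · obtain ⟨D, hD⟩ := ih
      have hlen : 2 ≤ (c :: c' :: v'').length := by simp
      obtain ⟨v', x, y, hv⟩ := exists_last2 hlen
      rcases hD with hD | hD
      · rw [hv] at hD
        have hD' : (u ++ [N] ++ v') ++ [x, y] = D ++ [W, S] := by simpa using hD
        have := append2_inj hD'
        exact ⟨u ++ [E, N, W] ++ v', Or.inl (by simp [hv, this.1, this.2])⟩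
      · rw [hv] at hD
        have hD' : (u ++ [N] ++ v') ++ [x, y] = D ++ [S, S] := by simpa using hD
        have := append2_inj hD'
        exact ⟨u ++ [E, N, W] ++ v', Or.inr (by simp [hv, this.1, this.2])⟩
  | double u v h ih =>
    rcases v with _ | ⟨c, _ | ⟨c', v''⟩⟩
    · obtain ⟨D, hD⟩ := ih
      rcases hD with hD | hD
      · have : N = S := append1_inj (A := u ++ [W]) (B := D ++ [W]) (by simpa using hD)
        exact absurd this (by decide)
      · have : N = S := append1_inj (A := u ++ [W]) (B := D ++ [S]) (by simpa using hD)
        exact absurd this (by decide)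
    · obtain ⟨D, hD⟩ := ih
      rcases hD with hD | hD
      · have hD' : (u ++ [W]) ++ [N, c] = D ++ [W, S] := by simpa using hD
        exact absurd (append2_inj hD').1 (by decide)
      · have hD' : (u ++ [W]) ++ [N, c] = D ++ [S, S] := by simpa using hD
        exact absurd (append2_inj hD').1 (by decide)
    · obtain ⟨D, hD⟩ := ih
      have hlen : 2 ≤ (c :: c' :: v'').length := by simp
      obtain ⟨v', x, y, hv⟩ := exists_last2 hlen
      rcases hD with hD | hD
      · rw [hv] at hD
        have hD' : (u ++ [W, N] ++ v') ++ [x, y] = D ++ [W, S] := by simpa using hD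
        have := append2_inj hD'
        exact ⟨u ++ [N, W] ++ v', Or.inl (by simp [hv, this.1, this.2])⟩
      · rw [hv] at hD
        have hD' : (u ++ [W, N] ++ v') ++ [x, y] = D ++ [S, S] := by simpa using hD
        have := append2_inj hD'
        exact ⟨u ++ [N, W] ++ v', Or.inr (by simp [hv, this.1, this.2])⟩

/-! ### The prefix positivity invariant -/

lemma prefix_nfree {j : ℕ} {T p q : List Letter} (h : p ++ q = rep j ++ N :: T)
    (hN : N ∉ p) : ∃ k, p = rep k := by
  rcases List.append_eq_append_iff.1 h with ⟨a', ha1, _⟩ | ⟨c', hc1, hc2⟩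
  · exact ⟨p.length, (rep_eq_append ha1).1⟩
  · rcases c' with _ | ⟨x, c''⟩
    · exact ⟨j, by simpa using hc1⟩
    · obtain ⟨hx, _⟩ : N = x ∧ T = c'' ++ q := by simpa using hc2
      rw [hc1, ← hx] at hN
      simp at hN

lemma ff_Q {F : List Letter} (hF : IsFF F) :
    ∀ p q : List Letter, p ++ q = F → 0 ≤ lat p ∧ (N ∈ p → q ≠ [] → 1 ≤ lat p) := by
  induction hF with
  | base =>
    intro p q hpq
    rcases p with _ | ⟨a, p⟩
    · exact ⟨le_refl 0, fun hN => by simp at hN⟩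
    obtain ⟨rfl, hpq⟩ : a = E ∧ p ++ q = [N, W, S] := by simpa using hpq
    rcases p with _ | ⟨a, p⟩
    · exact ⟨by decide, fun hN => by simp at hN⟩
    obtain ⟨rfl, hpq⟩ : a = N ∧ p ++ q = [W, S] := by simpa using hpq
    rcases p with _ | ⟨a, p⟩
    · exact ⟨by decide, fun _ _ => by decide⟩
    obtain ⟨rfl, hpq⟩ : a = W ∧ p ++ q = [S] := by simpa using hpq
    rcases p with _ | ⟨a, p⟩
    · exact ⟨by decide, fun _ _ => by decide⟩
    obtain ⟨rfl, hpq⟩ : a = S ∧ p ++ q = [] := by simpa using hpq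
    obtain ⟨rfl, rfl⟩ : p = [] ∧ q = [] := by simpa using hpq
    exact ⟨by decide, fun _ hq => absurd rfl hq⟩
  | upper u v h ih =>
    intro p q hpq
    have hpq' : p ++ q = u ++ (N :: W :: S :: v) := by simpa using hpq
    rcases List.append_eq_append_iff.1 hpq' with ⟨t, hu, hq⟩ | ⟨s, hp, hs⟩
    · have hold := ih p (t ++ W :: v) (by rw [hu]; simp)
      exact ⟨hold.1, fun hN _ => hold.2 hN (by simp)⟩
    · rcases s with _ | ⟨x, s⟩
      · rw [List.append_nil] at hp; subst hp
        have hold := ih p (W :: v) (by simp)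
        exact ⟨hold.1, fun hN _ => hold.2 hN (by simp)⟩
      obtain ⟨rfl, hs⟩ : N = x ∧ W :: S :: v = s ++ q := by simpa using hs
      rcases s with _ | ⟨y, s⟩
      · subst hp
        have h0 := (ih u (W :: v) (by simp)).1
        constructor
        · simp [lat, List.count_append, List.count_cons] at h0 ⊢; omega
        · intro _ _
          simp [lat, List.count_append, List.count_cons] at h0 ⊢; omega
      obtain ⟨rfl, hs⟩ : W = y ∧ S :: v = s ++ q := by simpa using hs
      rcases s with _ | ⟨z, s⟩
      · subst hp
        have h0 := (ih u (W :: v) (by simp)).1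
        constructor
        · simp [lat, List.count_append, List.count_cons] at h0 ⊢; omega
        · intro _ _
          simp [lat, List.count_append, List.count_cons] at h0 ⊢; omega
      obtain ⟨rfl, hv⟩ : S = z ∧ v = s ++ q := by simpa using hs
      subst hp
      have hold := ih (u ++ [W] ++ s) q (by simp [hv])
      have h1 := hold.1
      constructor
      · simp [lat, List.count_append, List.count_cons] at h1 ⊢; omega
      · intro hN hq0
        by_cases hNu : N ∈ u
        · have h2 := hold.2 (by simp [hNu]) hq0
          simp [lat, List.count_append, List.count_cons] at h2 ⊢; omega
        by_cases hNs : N ∈ s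
        · have h2 := hold.2 (by simp [hNs]) hq0
          simp [lat, List.count_append, List.count_cons] at h2 ⊢; omega
        · exfalso
          obtain ⟨j, T, hj, hform⟩ := ff_form h
          have hpre : (u ++ [W] ++ s) ++ q = rep j ++ N :: T := by
            rw [← hform]; simp [hv]
          obtain ⟨k, hk⟩ := prefix_nfree hpre (by simp [hNu, hNs])
          have hW : W ∈ u ++ [W] ++ s := by simp
          rw [hk] at hW
          exact absurd (List.eq_of_mem_replicate hW) (by decide)
  | lower u v h ih =>
    intro p q hpq
    have hpq' : p ++ q = u ++ (E :: N :: W :: v) := by simpa using hpq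
    rcases List.append_eq_append_iff.1 hpq' with ⟨t, hu, hq⟩ | ⟨s, hp, hs⟩
    · have hold := ih p (t ++ N :: v) (by rw [hu]; simp)
      exact ⟨hold.1, fun hN _ => hold.2 hN (by simp)⟩
    · rcases s with _ | ⟨x, s⟩
      · rw [List.append_nil] at hp; subst hp
        have hold := ih p (N :: v) (by simp)
        exact ⟨hold.1, fun hN _ => hold.2 hN (by simp)⟩
      obtain ⟨rfl, hs⟩ : E = x ∧ N :: W :: v = s ++ q := by simpa using hs
      rcases s with _ | ⟨y, s⟩
      · subst hp
        have hold := ih u (N :: v) (by simp)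
        constructor
        · have h0 := hold.1
          simp [lat, List.count_append, List.count_cons] at h0 ⊢; omega
        · intro hN hq0
          have hNu : N ∈ u := by simpa using hN
          have h2 := hold.2 hNu (by simp)
          simp [lat, List.count_append, List.count_cons] at h2 ⊢; omega
      obtain ⟨rfl, hs⟩ : N = y ∧ W :: v = s ++ q := by simpa using hs
      rcases s with _ | ⟨z, s⟩
      · subst hp
        have h0 := (ih u (N :: v) (by simp)).1
        constructor
        · simp [lat, List.count_append, List.count_cons] at h0 ⊢; omega
        · intro _ _
          simp [lat, List.count_append, List.count_cons] at h0 ⊢; omega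
      obtain ⟨rfl, hv⟩ : W = z ∧ v = s ++ q := by simpa using hs
      subst hp
      have hold := ih (u ++ [N] ++ s) q (by simp [hv])
      have h2 := hold.2 (by simp) 
      constructor
      · have h1 := hold.1
        simp [lat, List.count_append, List.count_cons] at h1 ⊢; omega
      · intro _ hq0
        have h3 := h2 hq0
        simp [lat, List.count_append, List.count_cons] at h3 ⊢; omega
  | double u v h ih =>
    intro p q hpq
    have hpq' : p ++ q = u ++ (N :: W :: v) := by simpa using hpq
    rcases List.append_eq_append_iff.1 hpq' with ⟨t, hu, hq⟩ | ⟨s, hp, hs⟩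
    · have hold := ih p (t ++ W :: N :: v) (by rw [hu]; simp)
      exact ⟨hold.1, fun hN _ => hold.2 hN (by simp)⟩
    · rcases s with _ | ⟨x, s⟩
      · rw [List.append_nil] at hp; subst hp
        have hold := ih p (W :: N :: v) (by simp)
        exact ⟨hold.1, fun hN _ => hold.2 hN (by simp)⟩
      obtain ⟨rfl, hs⟩ : N = x ∧ W :: v = s ++ q := by simpa using hs
      rcases s with _ | ⟨y, s⟩
      · subst hp
        have h0 := (ih u (W :: N :: v) (by simp)).1
        constructor
        · simp [lat, List.count_append, List.count_cons] at h0 ⊢; omega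
        · intro _ _
          simp [lat, List.count_append, List.count_cons] at h0 ⊢; omega
      obtain ⟨rfl, hv⟩ : W = y ∧ v = s ++ q := by simpa using hs
      subst hp
      have hold := ih (u ++ [W, N] ++ s) q (by simp [hv])
      have h2 := hold.2 (by simp)
      constructor
      · have h1 := hold.1
        simp [lat, List.count_append, List.count_cons] at h1 ⊢; omega
      · intro _ hq0
        have h3 := h2 hq0
        simp [lat, List.count_append, List.count_cons] at h3 ⊢; omega

/-! ### Closure of fish under augmentation and concatenation -/

lemma rep_swap (k : ℕ) (X : List Letter) : rep k ++ E :: X = rep (k + 1) ++ X := by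
  rw [rep_succ_app]; simp

lemma ff_last_split {u m v : List Letter} (h : IsFF (u ++ m ++ v)) (hv : v ≠ []) :
    ∃ v', v = v' ++ [S] := by
  obtain ⟨D, hD⟩ := ff_last h
  obtain ⟨v'', x, hx⟩ := exists_last1 hv
  rw [hx] at hD
  have h' : (u ++ m ++ v'') ++ [x] = D ++ [S] := by simpa using hD
  exact ⟨v'', by rw [hx, append1_inj h']⟩

lemma ff_aug {F : List Letter} (hF : IsFF F) :
    ∀ i, 1 ≤ i → i ≤ jaw F → IsFF (ffAug F i) := by
  induction hF with
  | base =>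
    intro i h1 h2
    have hj : jaw [E, N, W, S] = 1 := rfl
    rw [hj] at h2
    have hi : i = 1 := by omega
    subst hi
    have he : ffAug [E, N, W, S] 1 = [E, N] ++ [N, W, S] ++ [S] := rfl
    rw [he]
    exact IsFF.upper [E, N] [S] (by simpa using IsFF.base)
  | upper u v h ih =>
    intro i h1 h2
    obtain ⟨j, T, hj, hform⟩ := ff_form h
    have h' : rep j ++ N :: T = u ++ W :: v := by simpa using hform.symm
    rcases rep_peel (by decide) h' with ⟨hc, _, _⟩ | ⟨u₂, hu, hT⟩
    · exact absurd hc (by decide)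
    have hF' : u ++ [N, W, S] ++ v = rep j ++ N :: (u₂ ++ N :: W :: S :: v) := by
      rw [hu]; simp
    rw [hF'] at h2 ⊢
    rw [jaw_rep_N] at h2
    rw [ffAug_eq]
    have hIH := ih i h1 (by rw [hform, jaw_rep_N]; exact h2)
    rw [hform, ffAug_eq, hT] at hIH
    have step := IsFF.upper (rep i ++ [N] ++ rep (j - i) ++ [N] ++ u₂) (v ++ [S])
      (by simpa using hIH)
    simpa using step
  | lower u v h ih =>
    intro i h1 h2
    obtain ⟨j, T, hj, hform⟩ := ff_form h
    have h' : rep j ++ N :: T = u ++ N :: v := by simpa using hform.symm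
    rcases rep_peel (by decide) h' with ⟨_, hu, hv⟩ | ⟨u₂, hu, hT⟩
    · -- lower gluing at the first N : jaw grows
      have hF' : u ++ [E, N, W] ++ v = rep (j + 1) ++ N :: (W :: T) := by
        rw [hu, hv, rep_succ_app]; simp
      rw [hF'] at h2 ⊢
      rw [jaw_rep_N] at h2
      rw [ffAug_eq]
      by_cases hij : i ≤ j
      · have hIH := ih i h1 (by rw [hform, jaw_rep_N]; exact hij)
        rw [hform, ffAug_eq] at hIH
        have step := IsFF.lower (rep i ++ [N] ++ rep (j - i)) (T ++ [S])
          (by simpa using hIH)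
        have e1 : rep i ++ [N] ++ rep (j - i) ++ [E, N, W] ++ (T ++ [S])
            = rep i ++ N :: (rep (j + 1 - i) ++ N :: (W :: T ++ [S])) := by
          rw [show j + 1 - i = (j - i) + 1 by omega, rep_succ_app]
          simp
        rw [e1] at step
        exact step
      · have hi : i = j + 1 := by omega
        subst hi
        have hIH := ih j hj (by rw [hform, jaw_rep_N])
        rw [hform, ffAug_eq, Nat.sub_self] at hIH
        have s1 := IsFF.lower (rep j) ([N] ++ (T ++ [S])) (by simpa using hIH)
        have e1 : rep j ++ [E, N, W] ++ ([N] ++ (T ++ [S]))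
            = (rep (j + 1) ++ [N]) ++ [W, N] ++ (T ++ [S]) := by
          rw [rep_succ_app]; simp
        rw [e1] at s1
        have s2 := IsFF.double (rep (j + 1) ++ [N]) (T ++ [S]) s1
        have e2 : (rep (j + 1) ++ [N]) ++ [N, W] ++ (T ++ [S])
            = rep (j + 1) ++ N :: (rep (j + 1 - (j + 1)) ++ N :: (W :: T ++ [S])) := by
          rw [Nat.sub_self]; simp
        rw [e2] at s2
        exact s2
    · -- lower gluing strictly after the jaw
      have hF' : u ++ [E, N, W] ++ v = rep j ++ N :: (u₂ ++ E :: N :: W :: v) := by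
        rw [hu]; simp
      rw [hF'] at h2 ⊢
      rw [jaw_rep_N] at h2
      rw [ffAug_eq]
      have hIH := ih i h1 (by rw [hform, jaw_rep_N]; exact h2)
      rw [hform, ffAug_eq, hT] at hIH
      have step := IsFF.lower (rep i ++ [N] ++ rep (j - i) ++ [N] ++ u₂) (v ++ [S])
        (by simpa using hIH)
      simpa using step
  | double u v h ih =>
    intro i h1 h2
    obtain ⟨j, T, hj, hform⟩ := ff_form h
    have h' : rep j ++ N :: T = u ++ W :: (N :: v) := by simpa using hform.symm
    rcases rep_peel (by decide) h' with ⟨hc, _, _⟩ | ⟨u₂, hu, hT⟩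
    · exact absurd hc (by decide)
    have hF' : u ++ [N, W] ++ v = rep j ++ N :: (u₂ ++ N :: W :: v) := by
      rw [hu]; simp
    rw [hF'] at h2 ⊢
    rw [jaw_rep_N] at h2
    rw [ffAug_eq]
    have hIH := ih i h1 (by rw [hform, jaw_rep_N]; exact h2)
    rw [hform, ffAug_eq, hT] at hIH
    have step := IsFF.double (rep i ++ [N] ++ rep (j - i) ++ [N] ++ u₂) (v ++ [S])
      (by simpa using hIH)
    simpa using step

lemma ff_conc {F1 F2 : List Letter} (h1 : IsFF F1) (h2 : IsFF F2) :
    IsFF (ffConc F1 F2) := by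
  obtain ⟨j, T, hj, hform⟩ := ff_form h1
  rw [hform, ffConc_eq]
  have h1' : IsFF (rep j ++ [N] ++ T) := by rw [hform] at h1; simpa using h1
  induction h2 with
  | base =>
    have : ([E, N, W, S] : List Letter).dropLast = [E, N, W] := rfl
    rw [this]
    exact IsFF.lower (rep j) T h1'
  | upper u v hP ihP =>
    rcases v with _ | ⟨c, v0⟩
    · exfalso
      obtain ⟨D, hD⟩ := ff_last hP
      have : W = S := append1_inj (A := u) (B := D) (by simpa using hD)
      exact absurd this (by decide)
    · obtain ⟨v', hv⟩ := ff_last_split hP (v := c :: v0) (by simp)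
      rw [hv]
      have e1 : (u ++ [N, W, S] ++ (v' ++ [S])).dropLast = u ++ [N, W, S] ++ v' := by
        rw [show u ++ [N, W, S] ++ (v' ++ [S]) = (u ++ [N, W, S] ++ v') ++ [S] by simp,
          List.dropLast_concat]
      have e2 : (u ++ [W] ++ (v' ++ [S])).dropLast = u ++ [W] ++ v' := by
        rw [show u ++ [W] ++ (v' ++ [S]) = (u ++ [W] ++ v') ++ [S] by simp,
          List.dropLast_concat]
      rw [e1]
      rw [hv, e2] at ihP
      have step := IsFF.upper (rep j ++ u) (v' ++ T) (by simpa using ihP)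
      simpa using step
  | lower u v hP ihP =>
    rcases v with _ | ⟨c, v0⟩
    · exfalso
      obtain ⟨D, hD⟩ := ff_last hP
      have : N = S := append1_inj (A := u) (B := D) (by simpa using hD)
      exact absurd this (by decide)
    · obtain ⟨v', hv⟩ := ff_last_split hP (v := c :: v0) (by simp)
      rw [hv]
      have e1 : (u ++ [E, N, W] ++ (v' ++ [S])).dropLast = u ++ [E, N, W] ++ v' := by
        rw [show u ++ [E, N, W] ++ (v' ++ [S]) = (u ++ [E, N, W] ++ v') ++ [S] by simp,
          List.dropLast_concat]
      have e2 : (u ++ [N] ++ (v' ++ [S])).dropLast = u ++ [N] ++ v' := by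
        rw [show u ++ [N] ++ (v' ++ [S]) = (u ++ [N] ++ v') ++ [S] by simp,
          List.dropLast_concat]
      rw [e1]
      rw [hv, e2] at ihP
      have step := IsFF.lower (rep j ++ u) (v' ++ T) (by simpa using ihP)
      simpa using step
  | double u v hP ihP =>
    rcases v with _ | ⟨c, v0⟩
    · exfalso
      obtain ⟨D, hD⟩ := ff_last hP
      have : N = S := append1_inj (A := u ++ [W]) (by simpa using hD)
      exact absurd this (by decide)
    · obtain ⟨v', hv⟩ := ff_last_split hP (v := c :: v0) (by simp)
      rw [hv]
      have e1 : (u ++ [N, W] ++ (v' ++ [S])).dropLast = u ++ [N, W] ++ v' := by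
        rw [show u ++ [N, W] ++ (v' ++ [S]) = (u ++ [N, W] ++ v') ++ [S] by simp,
          List.dropLast_concat]
      have e2 : (u ++ [W, N] ++ (v' ++ [S])).dropLast = u ++ [W, N] ++ v' := by
        rw [show u ++ [W, N] ++ (v' ++ [S]) = (u ++ [W, N] ++ v') ++ [S] by simp,
          List.dropLast_concat]
      rw [e1]
      rw [hv, e2] at ihP
      have step := IsFF.double (rep j ++ u) (v' ++ T) (by simpa using ihP)
      simpa using step

/-! ### A measure for well-founded induction -/

def inv : List Letter → ℕ
  | [] => 0
  | a :: t => (if a = W then t.count N else 0) + inv t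

lemma inv_append (a b : List Letter) :
    inv (a ++ b) = inv a + inv b + a.count W * b.count N := by
  induction a with
  | nil => simp [inv]
  | cons x t ih =>
    simp only [List.cons_append, inv, ih, List.count_append, List.count_cons]
    by_cases hx : x = W
    · subst hx; simp; ring
    · have hb : (x == W) = false := by simp [hx]
      simp only [if_neg hx, hb, Bool.false_eq_true, if_false, Nat.zero_add, Nat.add_zero,
        List.append_eq]

lemma inv_le_sq (L : List Letter) : inv L ≤ L.length * L.length := by
  induction L with
  | nil => simp [inv]
  | cons x t ih =>
    have h1 : t.count N ≤ t.length := List.count_le_length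
    simp only [inv, List.length_cons]
    have : (if x = W then t.count N else 0) ≤ t.length := by split <;> omega
    nlinarith

def mu (F : List Letter) : ℕ := F.length * F.length * F.length + inv F

lemma mu_lt_len {a b : List Letter} (h : a.length < b.length) : mu a < mu b := by
  have h1 := inv_le_sq a
  have h2 : a.length + 1 ≤ b.length := h
  unfold mu
  have h3 : (a.length + 1) * ((a.length + 1) * (a.length + 1))
      ≤ b.length * (b.length * b.length) := Nat.mul_le_mul h2 (Nat.mul_le_mul h2 h2)
  nlinarith [Nat.zero_le (inv b)]

lemma mu_double (u v : List Letter) : mu (u ++ [N, W] ++ v) < mu (u ++ [W, N] ++ v) := by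
  unfold mu
  have e1 : inv (u ++ [N, W] ++ v)
      = inv u + inv v + u.count W * (v.count N + 1) + v.count N := by
    rw [inv_append, inv_append]
    simp [inv, List.count_append, List.count_cons]
    ring
  have e2 : inv (u ++ [W, N] ++ v)
      = inv u + inv v + u.count W * (v.count N + 1) + v.count N + 1 := by
    rw [inv_append, inv_append]
    simp [inv, List.count_append, List.count_cons]
    ring
  have e3 : (u ++ [N, W] ++ v).length = (u ++ [W, N] ++ v).length := by simp
  rw [e1, e2, e3]
  omega

/-! ### The four shapes -/

def ShapeFF (F : List Letter) : Prop :=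
  F = [E, N, W, S]
  ∨ (∃ F1 i, IsFF F1 ∧ 1 ≤ i ∧ i ≤ jaw F1 ∧ F = ffAug F1 i)
  ∨ (∃ F2, IsFF F2 ∧ F = ffConc [E, N, W, S] F2)
  ∨ (∃ F1 F2 i, IsFF F1 ∧ IsFF F2 ∧ 1 ≤ i ∧ i ≤ jaw F1 ∧ F = ffConc (ffAug F1 i) F2)

theorem ff_shape_aux : ∀ n F, F.length ≤ n → IsFF F → ShapeFF F := by
  intro n
  induction n using Nat.strong_induction_on with
  | _ n IHn =>
  have IH : ∀ G, G.length < n → IsFF G → ShapeFF G := fun G hG hGF =>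
    IHn G.length hG G le_rfl hGF
  intro F hlen hF
  revert hlen
  induction hF with
  | base => intro _; exact Or.inl rfl
  | upper u v h ih =>
    intro hlen
    have hP : ShapeFF (u ++ [W] ++ v) := ih (by
      simp only [List.length_append, List.length_cons, List.length_nil] at hlen ⊢
      omega)
    rcases hP with hI | ⟨F1, i, hF1, hi1, hile, hPeq⟩ | ⟨F2, hF2, hPeq⟩ |
      ⟨F1, F2, i, hF1, hF2, hi1, hile, hPeq⟩
    · -- P = ENWS ; the W is at position 3
      have hI' : u ++ W :: v = [E, N, W, S] := by simpa using hI
      rcases u with _ | ⟨a, u⟩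
      · simp at hI'
      obtain ⟨rfl, hI'⟩ : a = E ∧ u ++ W :: v = [N, W, S] := by simpa using hI'
      rcases u with _ | ⟨a, u⟩
      · simp at hI'
      obtain ⟨rfl, hI'⟩ : a = N ∧ u ++ W :: v = [W, S] := by simpa using hI'
      rcases u with _ | ⟨a, u⟩
      · obtain rfl : v = [S] := by simpa using hI'
        right; left
        exact ⟨[E, N, W, S], 1, IsFF.base, le_refl 1, le_refl 1, rfl⟩
      obtain ⟨rfl, hI'⟩ : a = W ∧ u ++ W :: v = [S] := by simpa using hI'
      rcases u with _ | ⟨a, u⟩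
      · simp at hI'
      obtain ⟨rfl, hI'⟩ : a = S ∧ u ++ W :: v = [] := by simpa using hI'
      simp at hI'
    · -- P = ffAug F1 i : the W is inside the tail of F1
      obtain ⟨j1, T1, hj1, hs1⟩ := ff_form hF1
      have hjaw1 : jaw F1 = j1 := by rw [hs1]; exact jaw_rep_N _ _
      rw [hjaw1] at hile
      rw [hs1, ffAug_eq] at hPeq
      have h1 : rep i ++ N :: (rep (j1 - i) ++ N :: (T1 ++ [S])) = u ++ W :: v := by
        simpa using hPeq.symm
      rcases rep_peel (by decide) h1 with ⟨hc, _, _⟩ | ⟨u₂, hu, h2⟩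
      · exact absurd hc (by decide)
      rcases rep_peel (by decide) h2 with ⟨hc, _, _⟩ | ⟨u₃, hu₂, h3⟩
      · exact absurd hc (by decide)
      obtain ⟨t, hT1, hv⟩ := split_left h3 (by decide)
      right; left
      refine ⟨rep j1 ++ N :: (u₃ ++ N :: W :: S :: t), i, ?_, hi1, ?_, ?_⟩
      · rw [hs1, hT1] at hF1
        have step := IsFF.upper (rep j1 ++ [N] ++ u₃) t (by simpa using hF1)
        simpa using step
      · rw [jaw_rep_N]; exact hile
      · rw [ffAug_eq, hu, hu₂, hv]
        simp
    · -- P = ffConc ENWS F2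
      obtain ⟨j2, H2, hj2, hjaw2, hs2⟩ := ff_struct hF2
      have hhead : ([E, N, W, S] : List Letter) = rep 1 ++ N :: [W, S] := rfl
      have hdl : F2.dropLast = rep j2 ++ N :: H2 := by
        rw [hs2, show rep j2 ++ N :: (H2 ++ [S]) = (rep j2 ++ N :: H2) ++ [S] by simp,
          List.dropLast_concat]
      rw [hhead, ffConc_eq, hdl] at hPeq
      have h1 : rep (1 + j2) ++ N :: (H2 ++ [W, S]) = u ++ W :: v := by
        rw [rep_add]; simpa using hPeq.symm
      rcases rep_peel (by decide) h1 with ⟨hc, _, _⟩ | ⟨u₂, hu, h2⟩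
      · exact absurd hc (by decide)
      rcases cons_split h2 with ⟨t, hH2, hv⟩ | ⟨t, hu₂, h3⟩
      · -- the W is inside H2 : upper-glue F2
        right; right; left
        refine ⟨rep j2 ++ N :: (u₂ ++ N :: W :: S :: t ++ [S]), ?_, ?_⟩
        · rw [hs2, hH2] at hF2
          have step := IsFF.upper (rep j2 ++ [N] ++ u₂) (t ++ [S]) (by simpa using hF2)
          simpa using step
        · have hdl' : (rep j2 ++ N :: (u₂ ++ N :: W :: S :: t ++ [S])).dropLast
              = rep j2 ++ N :: (u₂ ++ N :: W :: S :: t) := by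
            rw [show rep j2 ++ N :: (u₂ ++ N :: W :: S :: t ++ [S])
              = (rep j2 ++ N :: (u₂ ++ N :: W :: S :: t)) ++ [S] by simp, List.dropLast_concat]
          rw [hhead, ffConc_eq, hdl', hu, hv, rep_add]
          simp
      · -- the W is the last W of P : F = ffConc (ffAug ENWS 1) F2
        rcases t with _ | ⟨x, t⟩
        · obtain rfl : v = [S] := by simpa using h3.symm
          rw [List.append_nil] at hu₂
          subst hu₂
          right; right; right
          refine ⟨[E, N, W, S], F2, 1, IsFF.base, hF2, le_refl 1, le_refl 1, ?_⟩
          have ha : ffAug [E, N, W, S] 1 = rep 1 ++ N :: [N, W, S, S] := rfl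
          rw [ha, ffConc_eq, hdl, hu, rep_add]
          simp
        · obtain ⟨rfl, h4⟩ : W = x ∧ [S] = t ++ W :: v := by simpa using h3
          rcases t with _ | ⟨y, t⟩
          · simp at h4
          · obtain ⟨rfl, h5⟩ : S = y ∧ [] = t ++ W :: v := by simpa using h4
            simp at h5
    · -- P = ffConc (ffAug F1 i) F2
      obtain ⟨j1, T1, hj1, hs1⟩ := ff_form hF1
      have hjaw1 : jaw F1 = j1 := by rw [hs1]; exact jaw_rep_N _ _
      rw [hjaw1] at hile
      obtain ⟨j2, H2, hj2, hjaw2, hs2⟩ := ff_struct hF2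
      have hdl : F2.dropLast = rep j2 ++ N :: H2 := by
        rw [hs2, show rep j2 ++ N :: (H2 ++ [S]) = (rep j2 ++ N :: H2) ++ [S] by simp,
          List.dropLast_concat]
      rw [hs1, ffAug_eq, ffConc_eq, hdl] at hPeq
      have hmerge : rep (i + j2) ++ N :: (H2 ++ (rep (j1 - i) ++ N :: (T1 ++ [S])))
          = rep i ++ (rep j2 ++ N :: H2) ++ (rep (j1 - i) ++ N :: (T1 ++ [S])) := by
        rw [rep_add, List.append_assoc]; simp
      have h1 : rep (i + j2) ++ N :: (H2 ++ (rep (j1 - i) ++ N :: (T1 ++ [S])))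
          = u ++ W :: v := by
        rw [hmerge, ← hPeq]; simp
      rcases rep_peel (by decide) h1 with ⟨hc, _, _⟩ | ⟨u₂, hu, h2⟩
      · exact absurd hc (by decide)
      rcases cons_split h2 with ⟨t, hH2, hv⟩ | ⟨t, hu₂, h3⟩
      · -- the W is inside H2 : upper-glue F2
        right; right; right
        refine ⟨F1, rep j2 ++ N :: (u₂ ++ N :: W :: S :: t ++ [S]), i, hF1, ?_, hi1,
          by rw [hjaw1]; exact hile, ?_⟩
        · rw [hs2, hH2] at hF2
          have step := IsFF.upper (rep j2 ++ [N] ++ u₂) (t ++ [S]) (by simpa using hF2)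
          simpa using step
        · have hdl' : (rep j2 ++ N :: (u₂ ++ N :: W :: S :: t ++ [S])).dropLast
              = rep j2 ++ N :: (u₂ ++ N :: W :: S :: t) := by
            rw [show rep j2 ++ N :: (u₂ ++ N :: W :: S :: t ++ [S])
              = (rep j2 ++ N :: (u₂ ++ N :: W :: S :: t)) ++ [S] by simp, List.dropLast_concat]
          rw [hs1, ffAug_eq, ffConc_eq, hdl', hu, hv]
          simp [rep_merge]
      · -- the W is inside T1 : upper-glue F1
        rcases rep_peel (by decide) h3 with ⟨hc, _, _⟩ | ⟨u₃, hw, h4⟩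
        · exact absurd hc (by decide)
        obtain ⟨t2, hT1, hv⟩ := split_left h4 (by decide)
        right; right; right
        refine ⟨rep j1 ++ N :: (u₃ ++ N :: W :: S :: t2), F2, i, ?_, hF2, hi1, ?_, ?_⟩
        · rw [hs1, hT1] at hF1
          have step := IsFF.upper (rep j1 ++ [N] ++ u₃) t2 (by simpa using hF1)
          simpa using step
        · rw [jaw_rep_N]; exact hile
        · rw [ffAug_eq, ffConc_eq, hdl, hu, hu₂, hw, hv]
          simp [rep_merge]
  | lower u v h ih =>
    intro hlen
    have hP : ShapeFF (u ++ [N] ++ v) := ih (by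
      simp only [List.length_append, List.length_cons, List.length_nil] at hlen ⊢
      omega)
    rcases hP with hI | ⟨F1, i, hF1, hi1, hile, hPeq⟩ | ⟨F2, hF2, hPeq⟩ |
      ⟨F1, F2, i, hF1, hF2, hi1, hile, hPeq⟩
    · -- P = ENWS ; the N is at position 2
      have hI' : u ++ N :: v = [E, N, W, S] := by simpa using hI
      rcases u with _ | ⟨a, u⟩
      · simp at hI'
      obtain ⟨rfl, hI'⟩ : a = E ∧ u ++ N :: v = [N, W, S] := by simpa using hI'
      rcases u with _ | ⟨a, u⟩
      · obtain rfl : v = [W, S] := by simpa using hI'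
        right; right; left
        exact ⟨[E, N, W, S], IsFF.base, rfl⟩
      obtain ⟨rfl, hI'⟩ : a = N ∧ u ++ N :: v = [W, S] := by simpa using hI'
      rcases u with _ | ⟨a, u⟩
      · simp at hI'
      obtain ⟨rfl, hI'⟩ : a = W ∧ u ++ N :: v = [S] := by simpa using hI'
      rcases u with _ | ⟨a, u⟩
      · simp at hI'
      obtain ⟨rfl, hI'⟩ : a = S ∧ u ++ N :: v = [] := by simpa using hI'
      simp at hI'
    · -- P = ffAug F1 i
      obtain ⟨j1, T1, hj1, hs1⟩ := ff_form hF1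
      have hjaw1 : jaw F1 = j1 := by rw [hs1]; exact jaw_rep_N _ _
      rw [hjaw1] at hile
      rw [hs1, ffAug_eq] at hPeq
      have h1 : rep i ++ N :: (rep (j1 - i) ++ N :: (T1 ++ [S])) = u ++ N :: v := by
        simpa using hPeq.symm
      rcases rep_peel (by decide) h1 with ⟨_, hu, hv⟩ | ⟨u₂, hu, h2⟩
      · -- the N is the distinguished N of the augmentation : F = ✠_i(F1) ⊙ ENWS
        right; right; right
        refine ⟨F1, [E, N, W, S], i, hF1, IsFF.base, hi1, by rw [hjaw1]; exact hile, ?_⟩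
        rw [hs1, ffAug_eq, ffConc_eq, hu, hv]
        simp
      rcases rep_peel (by decide) h2 with ⟨_, hu₂, hv⟩ | ⟨u₃, hu₂, h3⟩
      · -- the N is the first N of the tail of F1 : jaw of F1 grows
        right; left
        refine ⟨rep (j1 + 1) ++ N :: (W :: T1), i, ?_, hi1, ?_, ?_⟩
        · rw [hs1] at hF1
          have step := IsFF.lower (rep j1) T1 (by simpa using hF1)
          have e1 : rep j1 ++ [E, N, W] ++ T1 = rep (j1 + 1) ++ N :: (W :: T1) := by
            rw [rep_succ_app]; simp
          rw [e1] at step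
          exact step
        · rw [jaw_rep_N]; omega
        · rw [ffAug_eq, hu, hu₂, hv]
          rw [show j1 + 1 - i = (j1 - i) + 1 by omega, rep_succ_app]
          simp
      · -- the N is inside T1 : lower-glue F1
        obtain ⟨t, hT1, hv⟩ := split_left h3 (by decide)
        right; left
        refine ⟨rep j1 ++ N :: (u₃ ++ E :: N :: W :: t), i, ?_, hi1, ?_, ?_⟩
        · rw [hs1, hT1] at hF1
          have step := IsFF.lower (rep j1 ++ [N] ++ u₃) t (by simpa using hF1)
          simpa using step
        · rw [jaw_rep_N]; exact hile
        · rw [ffAug_eq, hu, hu₂, hv]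
          simp
    · -- P = ffConc ENWS F2
      obtain ⟨j2, H2, hj2, hjaw2, hs2⟩ := ff_struct hF2
      have hhead : ([E, N, W, S] : List Letter) = rep 1 ++ N :: [W, S] := rfl
      have hdl : F2.dropLast = rep j2 ++ N :: H2 := by
        rw [hs2, show rep j2 ++ N :: (H2 ++ [S]) = (rep j2 ++ N :: H2) ++ [S] by simp,
          List.dropLast_concat]
      rw [hhead, ffConc_eq, hdl] at hPeq
      have h1 : rep (1 + j2) ++ N :: (H2 ++ [W, S]) = u ++ N :: v := by
        rw [rep_add]; simpa using hPeq.symm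
      rcases rep_peel (by decide) h1 with ⟨_, hu, hv⟩ | ⟨u₂, hu, h2⟩
      · -- the N is the first N of F2 : lower-glue F2 at its first N
        right; right; left
        refine ⟨rep (j2 + 1) ++ N :: (W :: (H2 ++ [S])), ?_, ?_⟩
        · rw [hs2] at hF2
          have step := IsFF.lower (rep j2) (H2 ++ [S]) (by simpa using hF2)
          have e1 : rep j2 ++ [E, N, W] ++ (H2 ++ [S])
              = rep (j2 + 1) ++ N :: (W :: (H2 ++ [S])) := by
            rw [rep_succ_app]; simp
          rw [e1] at step
          exact step
        · have hdl' : (rep (j2 + 1) ++ N :: (W :: (H2 ++ [S]))).dropLast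
              = rep (j2 + 1) ++ N :: (W :: H2) := by
            rw [show rep (j2 + 1) ++ N :: (W :: (H2 ++ [S]))
              = (rep (j2 + 1) ++ N :: (W :: H2)) ++ [S] by simp, List.dropLast_concat]
          rw [hhead, ffConc_eq, hdl', hu, hv]
          simp [rep_merge, rep_swap, Nat.add_assoc, Nat.add_comm, Nat.add_left_comm]
          rw [show j2 + 2 = (j2 + 1) + 1 by omega, rep_succ_cons]
          simp
      rcases cons_split h2 with ⟨t, hH2, hv⟩ | ⟨t, hu₂, h3⟩
      · -- the N is inside H2 : lower-glue F2
        right; right; left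
        refine ⟨rep j2 ++ N :: (u₂ ++ E :: N :: W :: t ++ [S]), ?_, ?_⟩
        · rw [hs2, hH2] at hF2
          have step := IsFF.lower (rep j2 ++ [N] ++ u₂) (t ++ [S]) (by simpa using hF2)
          simpa using step
        · have hdl' : (rep j2 ++ N :: (u₂ ++ E :: N :: W :: t ++ [S])).dropLast
              = rep j2 ++ N :: (u₂ ++ E :: N :: W :: t) := by
            rw [show rep j2 ++ N :: (u₂ ++ E :: N :: W :: t ++ [S])
              = (rep j2 ++ N :: (u₂ ++ E :: N :: W :: t)) ++ [S] by simp, List.dropLast_concat]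
          rw [hhead, ffConc_eq, hdl', hu, hv, rep_add]
          simp
      · -- no N inside [W, S] : contradiction
        rcases t with _ | ⟨x, t⟩
        · simp at h3
        obtain ⟨rfl, h4⟩ : W = x ∧ [S] = t ++ N :: v := by simpa using h3
        rcases t with _ | ⟨y, t⟩
        · simp at h4
        obtain ⟨rfl, h5⟩ : S = y ∧ [] = t ++ N :: v := by simpa using h4
        simp at h5
    · -- P = ffConc (ffAug F1 i) F2
      obtain ⟨j1, T1, hj1, hs1⟩ := ff_form hF1
      have hjaw1 : jaw F1 = j1 := by rw [hs1]; exact jaw_rep_N _ _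
      rw [hjaw1] at hile
      obtain ⟨j2, H2, hj2, hjaw2, hs2⟩ := ff_struct hF2
      have hdl : F2.dropLast = rep j2 ++ N :: H2 := by
        rw [hs2, show rep j2 ++ N :: (H2 ++ [S]) = (rep j2 ++ N :: H2) ++ [S] by simp,
          List.dropLast_concat]
      rw [hs1, ffAug_eq, ffConc_eq, hdl] at hPeq
      have hmerge : rep (i + j2) ++ N :: (H2 ++ (rep (j1 - i) ++ N :: (T1 ++ [S])))
          = rep i ++ (rep j2 ++ N :: H2) ++ (rep (j1 - i) ++ N :: (T1 ++ [S])) := by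
        rw [rep_add, List.append_assoc]; simp
      have h1 : rep (i + j2) ++ N :: (H2 ++ (rep (j1 - i) ++ N :: (T1 ++ [S])))
          = u ++ N :: v := by
        rw [hmerge, ← hPeq]; simp
      rcases rep_peel (by decide) h1 with ⟨_, hu, hv⟩ | ⟨u₂, hu, h2⟩
      · -- the N is the leading N : lower-glue F2 at its first N
        right; right; right
        refine ⟨F1, rep (j2 + 1) ++ N :: (W :: (H2 ++ [S])), i, hF1, ?_, hi1,
          by rw [hjaw1]; exact hile, ?_⟩
        · rw [hs2] at hF2
          have step := IsFF.lower (rep j2) (H2 ++ [S]) (by simpa using hF2)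
          have e1 : rep j2 ++ [E, N, W] ++ (H2 ++ [S])
              = rep (j2 + 1) ++ N :: (W :: (H2 ++ [S])) := by
            rw [rep_succ_app]; simp
          rw [e1] at step
          exact step
        · have hdl' : (rep (j2 + 1) ++ N :: (W :: (H2 ++ [S]))).dropLast
              = rep (j2 + 1) ++ N :: (W :: H2) := by
            rw [show rep (j2 + 1) ++ N :: (W :: (H2 ++ [S]))
              = (rep (j2 + 1) ++ N :: (W :: H2)) ++ [S] by simp, List.dropLast_concat]
          rw [hs1, ffAug_eq, ffConc_eq, hdl', hu, hv]
          simp [rep_merge, rep_swap, Nat.add_assoc, Nat.add_comm, Nat.add_left_comm]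
      rcases cons_split h2 with ⟨t, hH2, hv⟩ | ⟨t, hu₂, h3⟩
      · -- the N is inside H2 : lower-glue F2
        right; right; right
        refine ⟨F1, rep j2 ++ N :: (u₂ ++ E :: N :: W :: t ++ [S]), i, hF1, ?_, hi1,
          by rw [hjaw1]; exact hile, ?_⟩
        · rw [hs2, hH2] at hF2
          have step := IsFF.lower (rep j2 ++ [N] ++ u₂) (t ++ [S]) (by simpa using hF2)
          simpa using step
        · have hdl' : (rep j2 ++ N :: (u₂ ++ E :: N :: W :: t ++ [S])).dropLast
              = rep j2 ++ N :: (u₂ ++ E :: N :: W :: t) := by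
            rw [show rep j2 ++ N :: (u₂ ++ E :: N :: W :: t ++ [S])
              = (rep j2 ++ N :: (u₂ ++ E :: N :: W :: t)) ++ [S] by simp, List.dropLast_concat]
          rw [hs1, ffAug_eq, ffConc_eq, hdl', hu, hv]
          simp [rep_merge]
      · -- the N is inside the part coming from ✠_i(F1)
        rcases rep_peel (by decide) h3 with ⟨_, hw, hv⟩ | ⟨u₃, hw, h4⟩
        · -- the N is the distinguished middle N : jaw of F1 grows
          right; right; right
          refine ⟨rep (j1 + 1) ++ N :: (W :: T1), F2, i, ?_, hF2, hi1, ?_, ?_⟩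
          · rw [hs1] at hF1
            have step := IsFF.lower (rep j1) T1 (by simpa using hF1)
            have e1 : rep j1 ++ [E, N, W] ++ T1 = rep (j1 + 1) ++ N :: (W :: T1) := by
              rw [rep_succ_app]; simp
            rw [e1] at step
            exact step
          · rw [jaw_rep_N]; omega
          · rw [ffAug_eq, ffConc_eq, hdl, hu, hu₂, hw, hv]
            rw [show j1 + 1 - i = (j1 - i) + 1 by omega, rep_succ_app]
            simp [rep_merge]
        · -- the N is inside T1 : lower-glue F1
          obtain ⟨t2, hT1, hv⟩ := split_left h4 (by decide)
          right; right; right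
          refine ⟨rep j1 ++ N :: (u₃ ++ E :: N :: W :: t2), F2, i, ?_, hF2, hi1, ?_, ?_⟩
          · rw [hs1, hT1] at hF1
            have step := IsFF.lower (rep j1 ++ [N] ++ u₃) t2 (by simpa using hF1)
            simpa using step
          · rw [jaw_rep_N]; exact hile
          · rw [ffAug_eq, ffConc_eq, hdl, hu, hu₂, hw, hv]
            simp [rep_merge]
  | double u v h ih =>
    intro hlen
    have hP : ShapeFF (u ++ [W, N] ++ v) := ih (by
      simp only [List.length_append, List.length_cons, List.length_nil] at hlen ⊢
      omega)
    rcases hP with hI | ⟨F1, i, hF1, hi1, hile, hPeq⟩ | ⟨F2, hF2, hPeq⟩ |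
      ⟨F1, F2, i, hF1, hF2, hi1, hile, hPeq⟩
    · -- P = ENWS : no factor WN, contradiction
      exfalso
      have hI' : u ++ W :: N :: v = [E, N, W, S] := by simpa using hI
      rcases u with _ | ⟨a, u⟩
      · simp at hI'
      obtain ⟨rfl, hI'⟩ : a = E ∧ u ++ W :: N :: v = [N, W, S] := by simpa using hI'
      rcases u with _ | ⟨a, u⟩
      · simp at hI'
      obtain ⟨rfl, hI'⟩ : a = N ∧ u ++ W :: N :: v = [W, S] := by simpa using hI'
      rcases u with _ | ⟨a, u⟩
      · simp at hI'
      obtain ⟨rfl, hI'⟩ : a = W ∧ u ++ W :: N :: v = [S] := by simpa using hI'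
      rcases u with _ | ⟨a, u⟩
      · simp at hI'
      obtain ⟨rfl, hI'⟩ : a = S ∧ u ++ W :: N :: v = [] := by simpa using hI'
      simp at hI'
    · -- P = ffAug F1 i : the factor WN lies inside T1
      obtain ⟨j1, T1, hj1, hs1⟩ := ff_form hF1
      have hjaw1 : jaw F1 = j1 := by rw [hs1]; exact jaw_rep_N _ _
      rw [hjaw1] at hile
      rw [hs1, ffAug_eq] at hPeq
      have h1 : rep i ++ N :: (rep (j1 - i) ++ N :: (T1 ++ [S])) = u ++ W :: (N :: v) := by
        simpa using hPeq.symm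
      rcases rep_peel (by decide) h1 with ⟨hc, _, _⟩ | ⟨u₂, hu, h2⟩
      · exact absurd hc (by decide)
      rcases rep_peel (by decide) h2 with ⟨hc, _, _⟩ | ⟨u₃, hu₂, h3⟩
      · exact absurd hc (by decide)
      obtain ⟨t, hT1, hv⟩ := split_left2 h3 (by decide) (by decide)
      right; left
      refine ⟨rep j1 ++ N :: (u₃ ++ N :: W :: t), i, ?_, hi1, ?_, ?_⟩
      · rw [hs1, hT1] at hF1
        have step := IsFF.double (rep j1 ++ [N] ++ u₃) t (by simpa using hF1)
        simpa using step
      · rw [jaw_rep_N]; exact hile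
      · rw [ffAug_eq, hu, hu₂, hv]
        simp
    · -- P = ffConc ENWS F2 : the factor WN lies inside H2
      obtain ⟨j2, H2, hj2, hjaw2, hs2⟩ := ff_struct hF2
      have hhead : ([E, N, W, S] : List Letter) = rep 1 ++ N :: [W, S] := rfl
      have hdl : F2.dropLast = rep j2 ++ N :: H2 := by
        rw [hs2, show rep j2 ++ N :: (H2 ++ [S]) = (rep j2 ++ N :: H2) ++ [S] by simp,
          List.dropLast_concat]
      rw [hhead, ffConc_eq, hdl] at hPeq
      have h1 : rep (1 + j2) ++ N :: (H2 ++ [W, S]) = u ++ W :: (N :: v) := by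
        rw [rep_add]; simpa using hPeq.symm
      rcases rep_peel (by decide) h1 with ⟨hc, _, _⟩ | ⟨u₂, hu, h2⟩
      · exact absurd hc (by decide)
      rcases cons_split h2 with ⟨t, hH2, htv⟩ | ⟨w, hu₂, h3⟩
      · -- W inside H2, so the N after it is also inside H2
        rcases t with _ | ⟨x, t2⟩
        · simp at htv
        obtain ⟨rfl, hv⟩ : x = N ∧ t2 ++ [W, S] = v := by simpa using htv.symm
        subst hv
        right; right; left
        refine ⟨rep j2 ++ N :: (u₂ ++ N :: W :: t2 ++ [S]), ?_, ?_⟩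
        · rw [hs2, hH2] at hF2
          have step := IsFF.double (rep j2 ++ [N] ++ u₂) (t2 ++ [S]) (by simpa using hF2)
          simpa using step
        · have hdl' : (rep j2 ++ N :: (u₂ ++ N :: W :: t2 ++ [S])).dropLast
              = rep j2 ++ N :: (u₂ ++ N :: W :: t2) := by
            rw [show rep j2 ++ N :: (u₂ ++ N :: W :: t2 ++ [S])
              = (rep j2 ++ N :: (u₂ ++ N :: W :: t2)) ++ [S] by simp, List.dropLast_concat]
          rw [hhead, ffConc_eq, hdl', hu, rep_add]
          simp
      · -- the W would be the final W : impossible since an N follows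
        exfalso
        rcases w with _ | ⟨x, w⟩
        · simp at h3
        obtain ⟨rfl, h4⟩ : W = x ∧ [S] = w ++ W :: N :: v := by simpa using h3
        rcases w with _ | ⟨y, w⟩
        · simp at h4
        obtain ⟨rfl, h5⟩ : S = y ∧ [] = w ++ W :: N :: v := by simpa using h4
        simp at h5
    · -- P = ffConc (ffAug F1 i) F2
      obtain ⟨j1, T1, hj1, hs1⟩ := ff_form hF1
      have hjaw1 : jaw F1 = j1 := by rw [hs1]; exact jaw_rep_N _ _
      rw [hjaw1] at hile
      obtain ⟨j2, H2, hj2, hjaw2, hs2⟩ := ff_struct hF2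
      have hdl : F2.dropLast = rep j2 ++ N :: H2 := by
        rw [hs2, show rep j2 ++ N :: (H2 ++ [S]) = (rep j2 ++ N :: H2) ++ [S] by simp,
          List.dropLast_concat]
      rw [hs1, ffAug_eq, ffConc_eq, hdl] at hPeq
      have hmerge : rep (i + j2) ++ N :: (H2 ++ (rep (j1 - i) ++ N :: (T1 ++ [S])))
          = rep i ++ (rep j2 ++ N :: H2) ++ (rep (j1 - i) ++ N :: (T1 ++ [S])) := by
        rw [rep_add, List.append_assoc]; simp
      have h1 : rep (i + j2) ++ N :: (H2 ++ (rep (j1 - i) ++ N :: (T1 ++ [S])))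
          = u ++ W :: (N :: v) := by
        rw [hmerge, ← hPeq]; simp
      rcases rep_peel (by decide) h1 with ⟨hc, _, _⟩ | ⟨u₂, hu, h2⟩
      · exact absurd hc (by decide)
      rcases cons_split h2 with ⟨t, hH2, htv⟩ | ⟨w, hu₂, h3⟩
      · -- the W is inside H2
        rcases t with _ | ⟨x, t2⟩
        · -- the factor WN sits at the junction : the wasp-waist interaction
          have htv' : N :: v = rep (j1 - i) ++ N :: (T1 ++ [S]) := by simpa using htv
          rcases hj1i : j1 - i with _ | k
          case succ =>
            rw [hj1i, rep_succ_cons] at htv'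
            simp at htv'
          -- j1 = i
          have hij : j1 = i := by omega
          obtain rfl : v = T1 ++ [S] := by
            rw [hj1i] at htv'
            simpa using htv'
          subst hij
          -- recursively decompose F2
          have hSF2 : ShapeFF F2 := by
            refine IH F2 ?_ hF2
            have hflen : F2.length < (u ++ [N, W] ++ (T1 ++ [S])).length := by
              rw [hs2, hH2, hu]
              simp only [List.length_append, List.length_cons, List.length_nil,
                List.length_replicate]
              omega
            omega
          have hlow : IsFF (rep (j1 + 1) ++ N :: (W :: T1)) := by
            rw [hs1] at hF1
            have step := IsFF.lower (rep j1) T1 (by simpa using hF1)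
            have e1 : rep j1 ++ [E, N, W] ++ T1 = rep (j1 + 1) ++ N :: (W :: T1) := by
              rw [rep_succ_app]; simp
            rw [e1] at step
            exact step
          rcases hSF2 with hI2 | ⟨A, a, hA, ha1, hale, hAeq⟩ | ⟨B, hB, hBeq⟩ |
            ⟨A, B, a, hA, hB, ha1, hale, hABeq⟩
          · -- F2 = ENWS : result is an augmentation
            have he : rep j2 ++ N :: (H2 ++ [S]) = rep 1 ++ N :: [W, S] := by
              rw [← hs2, hI2]; rfl
            obtain ⟨hj21, hH2S⟩ := rep_N_eq he
            have hH2W : H2 = [W] := by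
              have : H2 ++ [S] = [W] ++ [S] := by simpa using hH2S
              exact List.append_cancel_right this
            have hu₂nil : u₂ = [] := by
              rw [hH2W] at hH2
              rcases u₂ with _ | ⟨x, u₂⟩
              · rfl
              · have := congrArg List.length hH2
                simp at this
            right; left
            refine ⟨rep (j1 + 1) ++ N :: (W :: T1), j1 + 1, hlow, by omega, ?_, ?_⟩
            · rw [jaw_rep_N]
            · rw [ffAug_eq, Nat.sub_self, hu, hu₂nil, hj21]
              simp [rep_merge, rep_swap, Nat.add_assoc, Nat.add_comm, Nat.add_left_comm]
          · -- F2 = ffAug A a : impossible, F2 would end in SS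
            exfalso
            obtain ⟨jA, TA, hjA1, hjawA, hsA⟩ := ff_struct hA
            rw [hsA, ffAug_eq] at hAeq
            have e0 : (rep a ++ N :: (rep (jA - a) ++ N :: TA)) ++ [S, S] = F2 := by
              rw [hAeq]; simp
            have he : (rep a ++ N :: (rep (jA - a) ++ N :: TA)) ++ [S, S]
                = (rep j2 ++ N :: u₂) ++ [W, S] := by
              rw [e0, hs2, hH2]; simp
            exact absurd (two_last he) (by decide)
          · -- F2 = ffConc ENWS B : result is ✠_{i+1}(F1 ⊙ ENWS) ⊙ B
            obtain ⟨jB, HB, hjB1, hjawB, hsB⟩ := ff_struct hB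
            have hdlB : B.dropLast = rep jB ++ N :: HB := by
              rw [hsB, show rep jB ++ N :: (HB ++ [S]) = (rep jB ++ N :: HB) ++ [S] by simp,
                List.dropLast_concat]
            have hheadB : ([E, N, W, S] : List Letter) = rep 1 ++ N :: [W, S] := rfl
            rw [hheadB, ffConc_eq, hdlB] at hBeq
            have he : rep j2 ++ N :: (H2 ++ [S]) = rep (1 + jB) ++ N :: (HB ++ [W, S]) := by
              rw [← hs2, hBeq, rep_add]
              simp
            obtain ⟨hj2B, hH2B⟩ := rep_N_eq he
            have hu₂HB : u₂ = HB := by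
              have e2 : u₂ ++ [W, S] = HB ++ [W, S] := by
                rw [hH2] at hH2B
                simpa using hH2B
              exact List.append_cancel_right e2
            right; right; right
            refine ⟨rep (j1 + 1) ++ N :: (W :: T1), B, j1 + 1, hlow, hB, by omega, ?_, ?_⟩
            · rw [jaw_rep_N]
            · rw [ffAug_eq, ffConc_eq, Nat.sub_self, hdlB, hu, hu₂HB, hj2B]
              simp [rep_merge, rep_swap, Nat.add_assoc, Nat.add_comm, Nat.add_left_comm]
          · -- F2 = ffConc (ffAug A a) B : impossible, F2 would end in SS
            exfalso
            obtain ⟨jA, TA, hjA1, hjawA, hsA⟩ := ff_struct hA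
            rw [hsA, ffAug_eq, ffConc_eq] at hABeq
            have e0 : (rep a ++ B.dropLast ++ (rep (jA - a) ++ N :: TA)) ++ [S, S] = F2 := by
              rw [hABeq]; simp
            have he : (rep a ++ B.dropLast ++ (rep (jA - a) ++ N :: TA)) ++ [S, S]
                = (rep j2 ++ N :: u₂) ++ [W, S] := by
              rw [e0, hs2, hH2]; simp
            exact absurd (two_last he) (by decide)
        · -- the factor WN is entirely inside H2
          obtain ⟨rfl, hv⟩ : x = N ∧ t2 ++ (rep (j1 - i) ++ N :: (T1 ++ [S])) = v := by
            simpa using htv.symm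
          subst hv
          right; right; right
          refine ⟨F1, rep j2 ++ N :: (u₂ ++ N :: W :: t2 ++ [S]), i, hF1, ?_, hi1,
            by rw [hjaw1]; exact hile, ?_⟩
          · rw [hs2, hH2] at hF2
            have step := IsFF.double (rep j2 ++ [N] ++ u₂) (t2 ++ [S]) (by simpa using hF2)
            simpa using step
          · have hdl' : (rep j2 ++ N :: (u₂ ++ N :: W :: t2 ++ [S])).dropLast
                = rep j2 ++ N :: (u₂ ++ N :: W :: t2) := by
              rw [show rep j2 ++ N :: (u₂ ++ N :: W :: t2 ++ [S])
                = (rep j2 ++ N :: (u₂ ++ N :: W :: t2)) ++ [S] by simp, List.dropLast_concat]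
            rw [hs1, ffAug_eq, ffConc_eq, hdl', hu]
            simp [rep_merge]
      · -- the factor WN is inside T1
        rcases rep_peel (by decide) h3 with ⟨hc, _, _⟩ | ⟨u₃, hw, h4⟩
        · exact absurd hc (by decide)
        obtain ⟨t2, hT1, hv⟩ := split_left2 h4 (by decide) (by decide)
        right; right; right
        refine ⟨rep j1 ++ N :: (u₃ ++ N :: W :: t2), F2, i, ?_, hF2, hi1, ?_, ?_⟩
        · rw [hs1, hT1] at hF1
          have step := IsFF.double (rep j1 ++ [N] ++ u₃) t2 (by simpa using hF1)
          simpa using step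
        · rw [jaw_rep_N]; exact hile
        · rw [ffAug_eq, ffConc_eq, hdl, hu, hu₂, hw, hv]
          simp [rep_merge]

lemma ff_shape {F : List Letter} (hF : IsFF F) : ShapeFF F :=
  ff_shape_aux F.length F le_rfl hF

/-! ### Canonical forms -/

lemma dl_form (j2 : ℕ) (H2 : List Letter) :
    (rep j2 ++ N :: (H2 ++ [S])).dropLast = rep j2 ++ N :: H2 := by
  rw [show rep j2 ++ N :: (H2 ++ [S]) = (rep j2 ++ N :: H2) ++ [S] by simp,
    List.dropLast_concat]

lemma concHead_form (j2 : ℕ) (H2 : List Letter) :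
    ffConc [E, N, W, S] (rep j2 ++ N :: (H2 ++ [S]))
      = rep (1 + j2) ++ N :: (H2 ++ [W, S]) := by
  have hhead : ([E, N, W, S] : List Letter) = rep 1 ++ N :: [W, S] := rfl
  rw [hhead, ffConc_eq, dl_form, rep_add, List.append_assoc]
  simp

lemma concAug_form (i j1 j2 : ℕ) (T1 H2 : List Letter) :
    ffConc (ffAug (rep j1 ++ N :: (T1 ++ [S])) i) (rep j2 ++ N :: (H2 ++ [S]))
      = rep (i + j2) ++ N :: (H2 ++ (rep (j1 - i) ++ N :: ((T1 ++ [S]) ++ [S]))) := by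
  rw [ffAug_eq, ffConc_eq, dl_form, rep_add, List.append_assoc]
  simp
  exact rep_merge _ _ _

/-! ### Facts about the middle part of a fish -/

lemma h2_lat {F2 : List Letter} {j2 : ℕ} {H2 : List Letter} (hF2 : IsFF F2)
    (hs2 : F2 = rep j2 ++ N :: (H2 ++ [S])) : H2.count N = H2.count S := by
  have h := ff_lat hF2
  rw [hs2] at h
  simp [lat, List.count_append, List.count_cons, List.count_replicate] at h
  omega

lemma h2_long {F2 : List Letter} {j2 : ℕ} {H2 : List Letter} (hF2 : IsFF F2)
    (hs2 : F2 = rep j2 ++ N :: (H2 ++ [S])) : j2 + H2.count E = H2.count W := by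
  have h := ff_long hF2
  rw [hs2] at h
  simp [long, List.count_append, List.count_cons, List.count_replicate] at h
  omega

lemma h2_nonnil {F2 : List Letter} {j2 : ℕ} {H2 : List Letter} (hF2 : IsFF F2)
    (hs2 : F2 = rep j2 ++ N :: (H2 ++ [S])) (hj2 : 1 ≤ j2) : H2 ≠ [] := by
  intro hn
  have h := h2_long hF2 hs2
  rw [hn] at h
  simp at h
  omega

lemma h2_last {F2 : List Letter} {j2 : ℕ} {H2 : List Letter} (hF2 : IsFF F2)
    (hs2 : F2 = rep j2 ++ N :: (H2 ++ [S])) (hj2 : 1 ≤ j2) :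
    ∃ H', H2 = H' ++ [W] ∨ H2 = H' ++ [S] := by
  obtain ⟨H', x, hx⟩ := exists_last1 (h2_nonnil hF2 hs2 hj2)
  obtain ⟨D, hD⟩ := ff_penult hF2
  rw [hs2, hx] at hD
  rcases hD with hD | hD
  · have he : (rep j2 ++ N :: H') ++ [x, S] = D ++ [W, S] := by simpa using hD
    exact ⟨H', Or.inl (by rw [hx, (append2_inj he).1])⟩
  · have he : (rep j2 ++ N :: H') ++ [x, S] = D ++ [S, S] := by simpa using hD
    exact ⟨H', Or.inr (by rw [hx, (append2_inj he).1])⟩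

/-! ### The clash lemma : the tail of an augmentation cannot start with a fish middle -/

lemma tail_clash {F1 Y t R : List Letter} {j1 e : ℕ}
    (hF1 : IsFF F1) (hs1 : F1 = rep j1 ++ N :: Y)
    (h : rep e ++ N :: (Y ++ [S]) = t ++ R)
    (hR : 2 ≤ R.length)
    (hlat : lat t = 0)
    (hlast : ∃ t0, t = t0 ++ [W] ∨ t = t0 ++ [S]) : False := by
  obtain ⟨t0, ht0⟩ := hlast
  have htE : ∀ m, t ≠ rep m := by
    intro m hm
    rcases ht0 with h' | h' <;> rw [h'] at hm
    · have hmem : W ∈ rep m := by rw [← hm]; simp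
      exact absurd (List.eq_of_mem_replicate hmem) (by decide)
    · have hmem : S ∈ rep m := by rw [← hm]; simp
      exact absurd (List.eq_of_mem_replicate hmem) (by decide)
  rcases List.append_eq_append_iff.1 h with ⟨s, hts, hs⟩ | ⟨s, hes, hs⟩
  · rcases s with _ | ⟨x, s'⟩
    · rw [List.append_nil] at hts
      exact htE e hts
    obtain ⟨hx, hs'⟩ : N = x ∧ Y ++ [S] = s' ++ R := by simpa using hs
    subst hx
    rcases List.append_eq_append_iff.1 hs' with ⟨w, hsw, hw⟩ | ⟨w, hYw, hw⟩
    · have := congrArg List.length hw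
      simp at this
      omega
    · have hwn : w ≠ [] := by
        intro hn
        rw [hn] at hw
        have := congrArg List.length hw
        simp at this
        omega
      have hsplit : (rep j1 ++ N :: s') ++ w = F1 := by
        rw [hs1, hYw]; simp
      have hq := (ff_Q hF1 _ _ hsplit).2 (by simp) hwn
      rw [hts] at hlat
      simp [lat, List.count_append, List.count_cons, List.count_replicate] at hq hlat
      omega
  · exact htE t.length (rep_eq_append hes).1

/-! ### Injectivity of the four shapes -/

lemma aug_inj {F1 F1' : List Letter} {i i' : ℕ} (hF1 : IsFF F1) (hF1' : IsFF F1')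
    (hle : i ≤ jaw F1) (hle' : i' ≤ jaw F1')
    (heq : ffAug F1 i = ffAug F1' i') : F1 = F1' ∧ i = i' := by
  obtain ⟨j1, T1, hj1, hjaw1, hs1⟩ := ff_struct hF1
  obtain ⟨j1', T1', hj1', hjaw1', hs1'⟩ := ff_struct hF1'
  rw [hjaw1] at hle; rw [hjaw1'] at hle'
  rw [hs1, hs1', ffAug_eq, ffAug_eq] at heq
  obtain ⟨hii, heq2⟩ := rep_N_eq heq
  obtain ⟨hee, heq3⟩ := rep_N_eq heq2
  have hT : T1 = T1' :=
    List.append_cancel_right (List.append_cancel_right heq3)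
  subst hii
  have hjj : j1 = j1' := by omega
  exact ⟨by rw [hs1, hs1', hT, hjj], rfl⟩

lemma conc_head_inj {F2 F2' : List Letter} (hF2 : IsFF F2) (hF2' : IsFF F2')
    (heq : ffConc [E, N, W, S] F2 = ffConc [E, N, W, S] F2') : F2 = F2' := by
  obtain ⟨j2, H2, hj2, hjaw2, hs2⟩ := ff_struct hF2
  obtain ⟨j2', H2', hj2', hjaw2', hs2'⟩ := ff_struct hF2'
  rw [hs2, hs2', concHead_form, concHead_form] at heq
  obtain ⟨hj, he⟩ := rep_N_eq heq
  have hH : H2 = H2' := List.append_cancel_right he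
  rw [hs2, hs2', hH, show j2 = j2' by omega]

lemma conc_aug_inj {F1 F1' F2 F2' : List Letter} {i i' : ℕ}
    (hF1 : IsFF F1) (hF1' : IsFF F1') (hF2 : IsFF F2) (hF2' : IsFF F2')
    (hle : i ≤ jaw F1) (hle' : i' ≤ jaw F1')
    (heq : ffConc (ffAug F1 i) F2 = ffConc (ffAug F1' i') F2') :
    F1 = F1' ∧ F2 = F2' ∧ i = i' := by
  obtain ⟨j1, T1, hj1, hjaw1, hs1⟩ := ff_struct hF1
  obtain ⟨j1', T1', hj1', hjaw1', hs1'⟩ := ff_struct hF1'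
  obtain ⟨j2, H2, hj2, hjaw2, hs2⟩ := ff_struct hF2
  obtain ⟨j2', H2', hj2', hjaw2', hs2'⟩ := ff_struct hF2'
  rw [hjaw1] at hle; rw [hjaw1'] at hle'
  rw [hs1, hs2, hs1', hs2', concAug_form, concAug_form] at heq
  obtain ⟨hadd, heq2⟩ := rep_N_eq heq
  have main : H2 = H2' ∧ rep (j1 - i) ++ N :: ((T1 ++ [S]) ++ [S])
      = rep (j1' - i') ++ N :: ((T1' ++ [S]) ++ [S]) := by
    rcases List.append_eq_append_iff.1 heq2 with ⟨t, hH, hX⟩ | ⟨t, hH, hX⟩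
    · by_cases ht : t = []
      · subst ht
        rw [List.append_nil] at hH
        exact ⟨hH.symm, by simpa using hX⟩
      · exfalso
        have e2 := h2_lat hF2 hs2
        have e2' := h2_lat hF2' hs2'
        rw [hH] at e2'
        simp only [List.count_append] at e2'
        have hlt : lat t = 0 := by simp [lat]; omega
        obtain ⟨H0, hc⟩ := h2_last hF2' hs2' hj2'
        obtain ⟨t0, x, hx⟩ := exists_last1 ht
        have hlast : ∃ t0, t = t0 ++ [W] ∨ t = t0 ++ [S] := by
          rcases hc with hc | hc
          · have he' : (H2 ++ t0) ++ [x] = H0 ++ [W] := by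
              rw [show (H2 ++ t0) ++ [x] = H2 ++ t by rw [hx]; simp, ← hH, hc]
            exact ⟨t0, Or.inl (by rw [hx, append1_inj he'])⟩
          · have he' : (H2 ++ t0) ++ [x] = H0 ++ [S] := by
              rw [show (H2 ++ t0) ++ [x] = H2 ++ t by rw [hx]; simp, ← hH, hc]
            exact ⟨t0, Or.inr (by rw [hx, append1_inj he'])⟩
        have hR : 2 ≤ (rep (j1' - i') ++ N :: ((T1' ++ [S]) ++ [S])).length := by
          simp only [List.length_append, List.length_cons, List.length_nil,
            List.length_replicate]
          omega
        exact tail_clash hF1 hs1 hX hR hlt hlast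
    · by_cases ht : t = []
      · subst ht
        rw [List.append_nil] at hH
        exact ⟨hH, by simpa using hX.symm⟩
      · exfalso
        have e2 := h2_lat hF2' hs2'
        have e2' := h2_lat hF2 hs2
        rw [hH] at e2'
        simp only [List.count_append] at e2'
        have hlt : lat t = 0 := by simp [lat]; omega
        obtain ⟨H0, hc⟩ := h2_last hF2 hs2 hj2
        obtain ⟨t0, x, hx⟩ := exists_last1 ht
        have hlast : ∃ t0, t = t0 ++ [W] ∨ t = t0 ++ [S] := by
          rcases hc with hc | hc
          · have he' : (H2' ++ t0) ++ [x] = H0 ++ [W] := by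
              rw [show (H2' ++ t0) ++ [x] = H2' ++ t by rw [hx]; simp, ← hH, hc]
            exact ⟨t0, Or.inl (by rw [hx, append1_inj he'])⟩
          · have he' : (H2' ++ t0) ++ [x] = H0 ++ [S] := by
              rw [show (H2' ++ t0) ++ [x] = H2' ++ t by rw [hx]; simp, ← hH, hc]
            exact ⟨t0, Or.inr (by rw [hx, append1_inj he'])⟩
        have hR : 2 ≤ (rep (j1 - i) ++ N :: ((T1 ++ [S]) ++ [S])).length := by
          simp only [List.length_append, List.length_cons, List.length_nil,
            List.length_replicate]
          omega
        exact tail_clash hF1' hs1' hX hR hlt hlast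
  obtain ⟨hH2, hXeq⟩ := main
  obtain ⟨hee, hTT⟩ := rep_N_eq hXeq
  have hT : T1 = T1' :=
    List.append_cancel_right (List.append_cancel_right hTT)
  have hj2eq : j2 = j2' := by
    have l1 := h2_long hF2 hs2
    have l2 := h2_long hF2' hs2'
    rw [hH2] at l1
    omega
  have hieq : i = i' := by omega
  have hjeq : j1 = j1' := by omega
  exact ⟨by rw [hs1, hs1', hT, hjeq], by rw [hs2, hs2', hH2, hj2eq], hieq⟩

/-! ### Disjointness of the four shapes -/

lemma head_ne_aug {F1 : List Letter} {i : ℕ} (hF1 : IsFF F1) :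
    [E, N, W, S] ≠ ffAug F1 i := by
  obtain ⟨j1, T1, hj1, hjaw1, hs1⟩ := ff_struct hF1
  rw [hs1, ffAug_eq]
  intro heq
  have he : ([E, N] : List Letter) ++ [W, S]
      = (rep i ++ N :: (rep (j1 - i) ++ N :: T1)) ++ [S, S] := by
    simpa using heq
  exact absurd (two_last he) (by decide)

lemma head_ne_concHead {F2 : List Letter} (hF2 : IsFF F2) :
    [E, N, W, S] ≠ ffConc [E, N, W, S] F2 := by
  obtain ⟨j2, H2, hj2, hjaw2, hs2⟩ := ff_struct hF2
  rw [hs2, concHead_form]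
  intro heq
  have he : rep 1 ++ N :: [W, S] = rep (1 + j2) ++ N :: (H2 ++ [W, S]) := by
    simpa using heq
  obtain ⟨h1, _⟩ := rep_N_eq he
  omega

lemma head_ne_concAug {F1 F2 : List Letter} {i : ℕ} (hF1 : IsFF F1) (hF2 : IsFF F2) :
    [E, N, W, S] ≠ ffConc (ffAug F1 i) F2 := by
  obtain ⟨j1, T1, hj1, hjaw1, hs1⟩ := ff_struct hF1
  obtain ⟨j2, H2, hj2, hjaw2, hs2⟩ := ff_struct hF2
  rw [hs1, hs2, concAug_form]
  intro heq
  have he : ([E, N] : List Letter) ++ [W, S]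
      = (rep (i + j2) ++ N :: (H2 ++ (rep (j1 - i) ++ N :: T1))) ++ [S, S] := by
    simpa using heq
  exact absurd (two_last he) (by decide)

lemma aug_ne_concHead {F1 F2 : List Letter} {i : ℕ} (hF1 : IsFF F1) (hF2 : IsFF F2) :
    ffAug F1 i ≠ ffConc [E, N, W, S] F2 := by
  obtain ⟨j1, T1, hj1, hjaw1, hs1⟩ := ff_struct hF1
  obtain ⟨j2, H2, hj2, hjaw2, hs2⟩ := ff_struct hF2
  rw [hs1, hs2, ffAug_eq, concHead_form]
  intro heq
  have he : (rep i ++ N :: (rep (j1 - i) ++ N :: T1)) ++ [S, S]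
      = (rep (1 + j2) ++ N :: H2) ++ [W, S] := by
    simpa using heq
  exact absurd (two_last he) (by decide)

lemma concHead_ne_concAug {F1 F2 F2' : List Letter} {i : ℕ}
    (hF1 : IsFF F1) (hF2 : IsFF F2) (hF2' : IsFF F2') :
    ffConc [E, N, W, S] F2 ≠ ffConc (ffAug F1 i) F2' := by
  obtain ⟨j1, T1, hj1, hjaw1, hs1⟩ := ff_struct hF1
  obtain ⟨j2, H2, hj2, hjaw2, hs2⟩ := ff_struct hF2
  obtain ⟨j2', H2', hj2', hjaw2', hs2'⟩ := ff_struct hF2'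
  rw [hs1, hs2, hs2', concHead_form, concAug_form]
  intro heq
  have he : (rep (1 + j2) ++ N :: H2) ++ [W, S]
      = (rep (i + j2') ++ N :: (H2' ++ (rep (j1 - i) ++ N :: T1))) ++ [S, S] := by
    simpa using heq
  exact absurd (two_last he) (by decide)

lemma aug_ne_concAug {F1 F1' F2' : List Letter} {i i' : ℕ}
    (hF1 : IsFF F1) (hF1' : IsFF F1') (hF2' : IsFF F2') :
    ffAug F1 i ≠ ffConc (ffAug F1' i') F2' := by
  obtain ⟨j1, T1, hj1, hjaw1, hs1⟩ := ff_struct hF1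
  obtain ⟨j1', T1', hj1', hjaw1', hs1'⟩ := ff_struct hF1'
  obtain ⟨j2', H2', hj2', hjaw2', hs2'⟩ := ff_struct hF2'
  rw [hs1, hs1', hs2', ffAug_eq, concAug_form]
  intro heq
  obtain ⟨hadd, heq2⟩ := rep_N_eq heq
  have hlt : lat H2' = 0 := by
    have := h2_lat hF2' hs2'
    simp [lat]
    omega
  have hlast : ∃ t0, H2' = t0 ++ [W] ∨ H2' = t0 ++ [S] := h2_last hF2' hs2' hj2'
  have hR : 2 ≤ (rep (j1' - i') ++ N :: ((T1' ++ [S]) ++ [S])).length := by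
    simp only [List.length_append, List.length_cons, List.length_nil,
      List.length_replicate]
    omega
  exact tail_clash hF1 hs1 heq2 hR hlt hlast

/-- Every fighting fish satisfies exactly one of the four cases of the
decomposition, with uniquely determined data in each case. -/
theorem ff_decomposition (F : List Letter) (hF : IsFF F) :
    (CaseI F ∨ CaseII F ∨ CaseIII F ∨ CaseIV F) ∧
    ¬(CaseI F ∧ CaseII F) ∧ ¬(CaseI F ∧ CaseIII F) ∧ ¬(CaseI F ∧ CaseIV F) ∧
    ¬(CaseII F ∧ CaseIII F) ∧ ¬(CaseII F ∧ CaseIV F) ∧ ¬(CaseIII F ∧ CaseIV F) := by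
  have hS := ff_shape hF
  refine ⟨?_, ?_, ?_, ?_, ?_, ?_, ?_⟩
  · rcases hS with h | ⟨F1, i, h1, h2, h3, h4⟩ | ⟨F2, h1, h2⟩ | ⟨F1, F2, i, h1, h2, h3, h4, h5⟩
    · exact Or.inl h
    · refine Or.inr (Or.inl ⟨(F1, i), ⟨h1, h2, h3, h4⟩, ?_⟩)
      rintro ⟨G, k⟩ ⟨hG, hk1, hkle, hkeq⟩
      obtain ⟨e1, e2⟩ := aug_inj hG h1 hkle h3 (hkeq.symm.trans h4)
      have e1' : G = F1 := e1
      have e2' : k = i := e2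
      rw [e1', e2']
    · refine Or.inr (Or.inr (Or.inl ⟨F2, ⟨h1, h2⟩, ?_⟩))
      rintro G ⟨hG, hGeq⟩
      exact conc_head_inj hG h1 (hGeq.symm.trans h2)
    · refine Or.inr (Or.inr (Or.inr ⟨((F1, F2), i), ⟨h1, h2, h3, h4, h5⟩, ?_⟩))
      rintro ⟨⟨G1, G2⟩, k⟩ ⟨hG1, hG2, hk1, hkle, hkeq⟩
      obtain ⟨e1, e2, e3⟩ := conc_aug_inj hG1 h1 hG2 h2 hkle h4 (hkeq.symm.trans h5)
      have e1' : G1 = F1 := e1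
      have e2' : G2 = F2 := e2
      have e3' : k = i := e3
      rw [e1', e2', e3']
  · rintro ⟨hc1, ⟨⟨G, k⟩, ⟨hG, hk1, hkle, hkeq⟩, -⟩⟩
    exact head_ne_aug hG (hc1.symm.trans hkeq)
  · rintro ⟨hc1, ⟨G, ⟨hG, hGeq⟩, -⟩⟩
    exact head_ne_concHead hG (hc1.symm.trans hGeq)
  · rintro ⟨hc1, ⟨⟨⟨G1, G2⟩, k⟩, ⟨hG1, hG2, hk1, hkle, hkeq⟩, -⟩⟩
    exact head_ne_concAug hG1 hG2 (hc1.symm.trans hkeq)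
  · rintro ⟨⟨⟨G, k⟩, ⟨hG, hk1, hkle, hkeq⟩, -⟩, ⟨G2, ⟨hG2, hG2eq⟩, -⟩⟩
    exact aug_ne_concHead hG hG2 (hkeq.symm.trans hG2eq)
  · rintro ⟨⟨⟨G, k⟩, ⟨hG, hk1, hkle, hkeq⟩, -⟩, ⟨⟨⟨G1, G2⟩, k'⟩, ⟨hG1, hG2, hk1', hkle', hkeq'⟩, -⟩⟩
    exact aug_ne_concAug hG hG1 hG2 (hkeq.symm.trans hkeq')
  · rintro ⟨⟨G2, ⟨hG2, hG2eq⟩, -⟩, ⟨⟨⟨G1, G2'⟩, k'⟩, ⟨hG1, hG2', hk1', hkle', hkeq'⟩, -⟩⟩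
    exact concHead_ne_concAug hG1 hG2 hG2' (hG2eq.symm.trans hkeq')
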